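/- arXiv:0904.3674 — 7 statements merged into one kernel-verified Lean document; each statement's English description precedes it below -/
import Mathlib

section
/- Let k be an uncountable field and let A be an associative k-algebra equipped with a filtration {F_n}_{n≥0} such that every element of A is algebraic over k (i.e., every a ∈ A satisfies a nonzero polynomial relation: a^d is a k-linear combination of a, a^2, …, a^{d-1} for some d ≥ 1). Then every element of gr(A)_{≥1} is nilpotent. -/
open Finset Polynomial


/-- Vandermonde-type lemma: a vector-valued polynomial function vanishing on an
infinite set has zero coefficients. -/
lemma vand_aux {k M : Type*} [Field k] [AddCommGroup M] [Module k M]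
    {S : Set k} (hS : S.Infinite) (n : ℕ) (v : ℕ → M)
    (h : ∀ l ∈ S, ∑ t ∈ Finset.range n, l ^ t • v t = 0) :
    ∀ t < n, v t = 0 := by
  intro t ht
  rw [← Module.forall_dual_apply_eq_zero_iff k]
  intro f
  set q : Polynomial k := ∑ i ∈ Finset.range n, Polynomial.C (f (v i)) * Polynomial.X ^ i with hq
  have hq0 : q = 0 := by
    apply Polynomial.eq_zero_of_infinite_isRoot
    apply hS.mono
    intro l hl
    have heval : q.eval l = f (∑ t ∈ Finset.range n, l ^ t • v t) := by
      rw [map_sum]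
      simp only [hq, Polynomial.eval_finset_sum, Polynomial.eval_mul, Polynomial.eval_C,
        Polynomial.eval_pow, Polynomial.eval_X, map_smul, smul_eq_mul]
      exact Finset.sum_congr rfl fun i _ => mul_comm _ _
    simp only [Set.mem_setOf_eq, Polynomial.IsRoot]
    rw [heval, h l hl, map_zero]
  have hct : q.coeff t = f (v t) := by
    rw [hq, Polynomial.finset_sum_coeff]
    rw [Finset.sum_eq_single_of_mem t (Finset.mem_range.mpr ht)]
    · simp
    · intro i _ hit
      simp [Polynomial.coeff_C_mul, Polynomial.coeff_X_pow, Ne.symm hit]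
  rw [hq0] at hct
  simpa using hct.symm

/-- Reindexing a double sum over a rectangle as a sum over antidiagonals. -/
lemma reindex_aux {M : Type*} [AddCommMonoid M] (N1 N2 : ℕ) (g : ℕ × ℕ → M)
    (h1 : ∀ q : ℕ × ℕ, N1 ≤ q.1 → g q = 0) (h2 : ∀ q : ℕ × ℕ, N2 ≤ q.2 → g q = 0) :
    ∑ s ∈ Finset.range (N1 + N2), ∑ q ∈ Finset.HasAntidiagonal.antidiagonal s, g q
      = ∑ u ∈ Finset.range N1, ∑ v ∈ Finset.range N2, g (u, v) := by
  set N := N1 + N2 with hN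
  have inner : ∀ s ∈ Finset.range N,
      ∑ q ∈ Finset.HasAntidiagonal.antidiagonal s, g q
        = ∑ q ∈ Finset.range N ×ˢ Finset.range N, if q.1 + q.2 = s then g q else 0 := by
    intro s hs
    rw [Finset.mem_range] at hs
    calc ∑ q ∈ Finset.HasAntidiagonal.antidiagonal s, g q
        = ∑ q ∈ Finset.HasAntidiagonal.antidiagonal s, if q.1 + q.2 = s then g q else 0 :=
          Finset.sum_congr rfl fun q hq => (if_pos (Finset.HasAntidiagonal.mem_antidiagonal.mp hq)).symm
      _ = ∑ q ∈ Finset.range N ×ˢ Finset.range N, if q.1 + q.2 = s then g q else 0 := by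
          apply Finset.sum_subset
          · intro q hq
            exact Finset.mem_product.mpr
              ⟨Finset.mem_range.mpr (lt_of_le_of_lt (Finset.HasAntidiagonal.antidiagonal.fst_le hq) hs),
               Finset.mem_range.mpr (lt_of_le_of_lt (Finset.HasAntidiagonal.antidiagonal.snd_le hq) hs)⟩
          · intro q _ hq
            exact if_neg fun hc => hq (Finset.HasAntidiagonal.mem_antidiagonal.mpr hc)
  rw [Finset.sum_congr rfl inner, Finset.sum_comm]
  have mid : ∀ q ∈ Finset.range N ×ˢ Finset.range N,
      (∑ s ∈ Finset.range N, if q.1 + q.2 = s then g q else 0) = g q := by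
    intro q _
    rw [Finset.sum_ite_eq]
    by_cases hc : q.1 + q.2 < N
    · rw [if_pos (Finset.mem_range.mpr hc)]
    · rw [if_neg (fun hm => hc (Finset.mem_range.mp hm))]
      have : N1 ≤ q.1 ∨ N2 ≤ q.2 := by omega
      rcases this with h | h
      · exact (h1 q h).symm
      · exact (h2 q h).symm
  rw [Finset.sum_congr rfl mid]
  rw [← Finset.sum_product']
  symm
  apply Finset.sum_subset
  · intro q hq
    rw [Finset.mem_product] at hq ⊢
    exact ⟨Finset.mem_range.mpr (by have := Finset.mem_range.mp hq.1; omega),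
           Finset.mem_range.mpr (by have := Finset.mem_range.mp hq.2; omega)⟩
  · intro q _ hq
    rw [Finset.mem_product] at hq
    have : N1 ≤ q.1 ∨ N2 ≤ q.2 := by
      by_contra hcon
      push_neg at hcon
      exact hq ⟨Finset.mem_range.mpr hcon.1, Finset.mem_range.mpr hcon.2⟩
    rcases this with h | h
    · exact h1 q h
    · exact h2 q h

/-- All positive powers of an algebraic element lie in the span of the powers `a, …, a^{d-1}`. -/
lemma pow_mem_span_aux {k R : Type*} [Field k] [Ring R] [Algebra k R]
    (a : R) (d : ℕ) (hd : 1 ≤ d)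
    (h : a ^ d ∈ Submodule.span k ((fun i : ℕ => a ^ i) '' Set.Icc 1 (d - 1))) :
    ∀ D, 1 ≤ D → a ^ D ∈ Submodule.span k ((fun i : ℕ => a ^ i) '' Set.Icc 1 (d - 1)) := by
  set V := Submodule.span k ((fun i : ℕ => a ^ i) '' Set.Icc 1 (d - 1)) with hV
  have hmul : ∀ v ∈ V, v * a ∈ V := by
    intro v hv
    induction hv using Submodule.span_induction with
    | mem x hx =>
      obtain ⟨i, hi, rfl⟩ := hx
      rw [Set.mem_Icc] at hi
      rw [← pow_succ]
      by_cases hi' : i + 1 ≤ d - 1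
      · exact Submodule.subset_span ⟨i + 1, Set.mem_Icc.mpr ⟨by omega, hi'⟩, rfl⟩
      · have : i + 1 = d := by omega
        rw [this]; exact h
    | zero => rw [zero_mul]; exact V.zero_mem
    | add x y _ _ hx hy => rw [add_mul]; exact V.add_mem hx hy
    | smul c x _ hx => rw [smul_mul_assoc]; exact V.smul_mem c hx
  intro D hD
  induction D, hD using Nat.le_induction with
  | base =>
    by_cases hd1 : d = 1
    · rw [hd1, pow_one] at h; rw [pow_one]; exact h
    · exact Submodule.subset_span ⟨1, Set.mem_Icc.mpr ⟨le_refl 1, by omega⟩, pow_one a ▸ rfl⟩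
  | succ D hD ih => rw [pow_succ]; exact hmul _ ih

/-- **Main theorem.** Let `k` be an uncountable field and `A` an associative `k`-algebra
equipped with a filtration `F_0 ⊆ F_1 ⊆ ⋯` (an increasing chain of `k`-subspaces with
`⋃ F_i = A` and `F_i F_j ⊆ F_{i+j}`) such that every element of `A` is algebraic over
`k`.  Then every element of `gr(A)_{≥1}` is nilpotent.

Here the associated graded algebra `gr(A) = ⊕_{n≥0} F_n/F_{n−1}` (with `F_{−1} = 0`) is
presented by an algebra `B` together with `k`-linear maps `φ n : F n → B` realizing the
quotient maps `F_n → F_n/F_{n−1} ⊆ gr(A)`: the kernel of `φ n` is exactly `F_{n-1}`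
(with `φ 0` injective), and `φ p x * φ q y = φ (p+q) (x*y)`, which encodes the
multiplication `(x + F_{p−1})(y + F_{q−1}) = xy + F_{p+q−1}` of `gr(A)`.  The part
`gr(A)_{≥1} = ⊕_{n≥1} F_n/F_{n−1}` is then `⨆ n, range (φ (n+1))`. -/
theorem grading_of_filtered_algebraic_algebra_is_nil
    (k : Type*) [Field k] [Uncountable k]
    (A : Type*) [Ring A] [Algebra k A]
    (F : ℕ → Submodule k A)
    (hmono : Monotone F)
    (hexh : ∀ a : A, ∃ n : ℕ, a ∈ F n)
    (hmulF : ∀ i j : ℕ, ∀ x ∈ F i, ∀ y ∈ F j, x * y ∈ F (i + j))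
    (halg : ∀ a : A, ∃ d : ℕ, 1 ≤ d ∧
      a ^ d ∈ Submodule.span k ((fun i : ℕ => a ^ i) '' Set.Icc 1 (d - 1)))
    (B : Type*) [Ring B] [Algebra k B]
    (φ : ∀ n : ℕ, F n →ₗ[k] B)
    (hker0 : ∀ x : F 0, φ 0 x = 0 ↔ (x : A) = 0)
    (hker : ∀ n : ℕ, ∀ x : F (n + 1), φ (n + 1) x = 0 ↔ (x : A) ∈ F n)
    (hmulφ : ∀ p q : ℕ, ∀ x : F p, ∀ y : F q,
      φ p x * φ q y = φ (p + q) ⟨(x : A) * (y : A), hmulF p q _ x.2 _ y.2⟩) :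
    ∀ b ∈ ⨆ n : ℕ, LinearMap.range (φ (n + 1)), IsNilpotent b := by
  classical
  intro b hb
  rw [Submodule.mem_iSup_iff_exists_finsupp] at hb
  obtain ⟨f, hf, hbsum⟩ := hb
  choose g hg using fun n => LinearMap.mem_range.mp (hf n)
  set m : ℕ := f.support.sup id + 1 with hm
  clear_value m
  have hb' : b = ∑ n ∈ Finset.range m, φ (n + 1) (g n) := by
    rw [← hbsum]
    have h0 : (f.sum fun _ x => x) = ∑ n ∈ f.support, f n := rfl
    rw [h0]
    have hsub : f.support ⊆ Finset.range m := by
      intro n hn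
      have h1 := Finset.le_sup (f := id) hn
      simp only [id] at h1
      exact Finset.mem_range.mpr (by omega)
    rw [Finset.sum_subset hsub (fun n _ hn => Finsupp.notMem_support_iff.mp hn)]
    exact Finset.sum_congr rfl fun n _ => (hg n).symm
  -- the lift polynomial
  set p : Polynomial A := ∑ n ∈ Finset.range m, Polynomial.monomial (n + 1) ((g n : A)) with hp
  have hcoeff : ∀ t, p.coeff t ∈ F t := by
    intro t
    rw [hp, Polynomial.finset_sum_coeff]
    apply Submodule.sum_mem
    intro n _
    rw [Polynomial.coeff_monomial]
    split_ifs with h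
    · rw [← h]; exact (g n).2
    · exact (F t).zero_mem
  have hc0 : p.coeff 0 = 0 := by
    rw [hp, Polynomial.finset_sum_coeff]
    apply Finset.sum_eq_zero; intro n _
    rw [Polynomial.coeff_monomial, if_neg (by omega)]
  have hch : ∀ t, m < t → p.coeff t = 0 := by
    intro t ht
    rw [hp, Polynomial.finset_sum_coeff]
    apply Finset.sum_eq_zero; intro n hn
    have hn' := Finset.mem_range.mp hn
    rw [Polynomial.coeff_monomial, if_neg (by omega)]
  have hgc : ∀ n ∈ Finset.range m, p.coeff (n + 1) = (g n : A) := by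
    intro n hn
    rw [hp, Polynomial.finset_sum_coeff, Finset.sum_eq_single_of_mem n hn]
    · rw [Polynomial.coeff_monomial, if_pos rfl]
    · intro i _ hin
      rw [Polynomial.coeff_monomial, if_neg (by omega)]
  -- coefficients of powers
  have hpmem : ∀ D t, (p ^ (D + 1)).coeff t ∈ F t := by
    intro D
    induction D with
    | zero => intro t; rw [zero_add, pow_one]; exact hcoeff t
    | succ D ih =>
      intro t
      rw [pow_succ, Polynomial.coeff_mul]
      apply Submodule.sum_mem
      intro q hq
      have hqs := Finset.HasAntidiagonal.mem_antidiagonal.mp hq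
      have h1 := hmulF q.1 q.2 _ (ih q.1) _ (hcoeff q.2)
      rwa [hqs] at h1
  have hplow : ∀ D t, t < D → (p ^ D).coeff t = 0 := by
    intro D
    induction D with
    | zero => intro t ht; omega
    | succ D ih =>
      intro t ht
      rw [pow_succ, Polynomial.coeff_mul]
      apply Finset.sum_eq_zero
      intro q hq
      have hqs := Finset.HasAntidiagonal.mem_antidiagonal.mp hq
      by_cases h2 : q.2 = 0
      · rw [h2, hc0, mul_zero]
      · rw [ih q.1 (by omega), zero_mul]
  have hphigh : ∀ D t, m * D < t → (p ^ D).coeff t = 0 := by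
    intro D
    induction D with
    | zero =>
      intro t ht
      rw [pow_zero, Polynomial.coeff_one, if_neg (by omega)]
    | succ D ih =>
      intro t ht
      rw [pow_succ, Polynomial.coeff_mul]
      apply Finset.sum_eq_zero
      intro q hq
      have hqs := Finset.HasAntidiagonal.mem_antidiagonal.mp hq
      have e : m * (D + 1) = m * D + m := by ring
      by_cases h2 : m < q.2
      · rw [hch q.2 h2, mul_zero]
      · push_neg at h2
        rw [ih q.1 (by omega), zero_mul]
  -- helpers for φ
  have phic : ∀ (s t : ℕ) (hst : s = t) (x : F s) (y : F t), (x : A) = (y : A) → φ s x = φ t y := by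
    intro s t hst
    subst hst
    intro x y hxy
    rw [Subtype.ext hxy]
  have phizero : ∀ (n : ℕ) (v : A) (hv : v ∈ F n), v = 0 → φ n ⟨v, hv⟩ = 0 := by
    intro n v hv h
    have : (⟨v, hv⟩ : F n) = 0 := Subtype.ext h
    rw [this, map_zero]
  -- the key identity
  have key : ∀ D, b ^ (D + 1)
      = ∑ t ∈ Finset.range (m * (D + 1) + 1), φ t ⟨(p ^ (D + 1)).coeff t, hpmem D t⟩ := by
    intro D
    induction D with
    | zero =>
      have e0 : m * (0 + 1) + 1 = m + 1 := by ring
      rw [e0]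
      simp only [Finset.sum_range_succ']
      rw [phizero 0 _ (hpmem 0 0) (by rw [zero_add, pow_one]; exact hc0), add_zero]
      have hcg : ∀ n ∈ Finset.range m,
          φ (n + 1) ⟨(p ^ (0 + 1)).coeff (n + 1), hpmem 0 (n + 1)⟩ = φ (n + 1) (g n) := by
        intro n hn
        refine phic _ _ rfl _ _ ?_
        show (p ^ (0 + 1)).coeff (n + 1) = ((g n : A))
        rw [zero_add, pow_one]
        exact hgc n hn
      rw [Finset.sum_congr rfl hcg]
      show b ^ 1 = _
      rw [pow_one]
      exact hb'
    | succ D ih =>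
      set G : ℕ × ℕ → B := fun q =>
        φ (q.1 + q.2) ⟨(p ^ (D + 1)).coeff q.1 * p.coeff q.2,
          hmulF q.1 q.2 _ (hpmem D q.1) _ (hcoeff q.2)⟩ with hGdef
      have hG1 : ∀ q : ℕ × ℕ, m * (D + 1) + 1 ≤ q.1 → G q = 0 := by
        intro q hq
        exact phizero _ _ _ (by rw [hphigh (D + 1) q.1 (by omega), zero_mul])
      have hG2 : ∀ q : ℕ × ℕ, m + 1 ≤ q.2 → G q = 0 := by
        intro q hq
        exact phizero _ _ _ (by rw [hch q.2 (by omega), mul_zero])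
      have e1 : (m * (D + 1) + 1) + (m + 1) = (m * (D + 1 + 1) + 1) + 1 := by ring
      calc b ^ (D + 1 + 1) = b ^ (D + 1) * b := pow_succ b (D + 1)
        _ = (∑ t ∈ Finset.range (m * (D + 1) + 1), φ t ⟨(p ^ (D + 1)).coeff t, hpmem D t⟩)
            * (∑ n ∈ Finset.range m, φ (n + 1) (g n)) := by rw [ih, ← hb']
        _ = ∑ t ∈ Finset.range (m * (D + 1) + 1), ∑ n ∈ Finset.range m,
              φ t ⟨(p ^ (D + 1)).coeff t, hpmem D t⟩ * φ (n + 1) (g n) :=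
            Finset.sum_mul_sum _ _ _ _
        _ = ∑ t ∈ Finset.range (m * (D + 1) + 1), ∑ v ∈ Finset.range (m + 1), G (t, v) := by
            apply Finset.sum_congr rfl
            intro t _
            simp only [Finset.sum_range_succ']
            have hz : G (t, 0) = 0 := phizero _ _ _ (by rw [hc0, mul_zero])
            rw [hz, add_zero]
            apply Finset.sum_congr rfl
            intro n hn
            rw [hmulφ t (n + 1) _ (g n)]
            refine phic _ _ rfl _ _ ?_
            show (p ^ (D + 1)).coeff t * ((g n : A)) = (p ^ (D + 1)).coeff t * p.coeff (n + 1)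
            rw [hgc n hn]
        _ = ∑ s ∈ Finset.range ((m * (D + 1) + 1) + (m + 1)),
              ∑ q ∈ Finset.HasAntidiagonal.antidiagonal s, G q :=
            (reindex_aux _ _ G hG1 hG2).symm
        _ = ∑ s ∈ Finset.range ((m * (D + 1 + 1) + 1) + 1),
              ∑ q ∈ Finset.HasAntidiagonal.antidiagonal s, G q := by rw [e1]
        _ = ∑ s ∈ Finset.range (m * (D + 1 + 1) + 1), ∑ q ∈ Finset.HasAntidiagonal.antidiagonal s, G q := by
            simp only [Finset.sum_range_succ]
            have hlast : ∑ q ∈ Finset.HasAntidiagonal.antidiagonal (m * (D + 1 + 1) + 1), G q = 0 := by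
              apply Finset.sum_eq_zero
              intro q hq
              have hqs := Finset.HasAntidiagonal.mem_antidiagonal.mp hq
              have e2 : m * (D + 1 + 1) = m * (D + 1) + m := by ring
              rcases Nat.lt_or_ge q.1 (m * (D + 1) + 1) with h | h
              · exact hG2 q (by omega)
              · exact hG1 q h
            rw [hlast, add_zero]
        _ = ∑ t ∈ Finset.range (m * (D + 1 + 1) + 1),
              φ t ⟨(p ^ (D + 1 + 1)).coeff t, hpmem (D + 1) t⟩ := by
            apply Finset.sum_congr rfl
            intro s _
            set H : ℕ × ℕ → F s := fun q =>
              if h : q.1 + q.2 = s then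
                ⟨(p ^ (D + 1)).coeff q.1 * p.coeff q.2,
                  h ▸ hmulF q.1 q.2 _ (hpmem D q.1) _ (hcoeff q.2)⟩
              else 0 with hHdef
            have h3 : ∀ q ∈ Finset.HasAntidiagonal.antidiagonal s, G q = φ s (H q) := by
              intro q hq
              have hqs := Finset.HasAntidiagonal.mem_antidiagonal.mp hq
              have hH : H q = ⟨(p ^ (D + 1)).coeff q.1 * p.coeff q.2,
                  hqs ▸ hmulF q.1 q.2 _ (hpmem D q.1) _ (hcoeff q.2)⟩ := by
                rw [hHdef]; exact dif_pos hqs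
              rw [hH]
              exact phic _ _ hqs _ _ rfl
            rw [Finset.sum_congr rfl h3, ← map_sum]
            congr 1
            apply Subtype.ext
            rw [Submodule.coe_sum]
            show _ = (p ^ (D + 1 + 1)).coeff s
            rw [pow_succ, Polynomial.coeff_mul]
            apply Finset.sum_congr rfl
            intro q hq
            have hqs := Finset.HasAntidiagonal.mem_antidiagonal.mp hq
            have hH : H q = ⟨(p ^ (D + 1)).coeff q.1 * p.coeff q.2,
                hqs ▸ hmulF q.1 q.2 _ (hpmem D q.1) _ (hcoeff q.2)⟩ := by
              rw [hHdef]; exact dif_pos hqs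
            rw [hH]
  -- evaluations
  set x : k → A := fun l =>
    Polynomial.eval₂ (RingHom.id A) (algebraMap k A l) p with hx
  have hxhom : ∀ (l : k) (D : ℕ),
      (x l) ^ D = Polynomial.eval₂ (RingHom.id A) (algebraMap k A l) (p ^ D) := by
    intro l D
    have := map_pow (Polynomial.eval₂RingHom' (RingHom.id A) (algebraMap k A l)
      (fun a => (Algebra.commute_algebraMap_left l a).symm)) p D
    exact this.symm
  have hdegp : p.natDegree ≤ m := by
    apply Polynomial.natDegree_le_iff_coeff_eq_zero.mpr
    intro t ht
    exact hch t ht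
  have hdegpow : ∀ D : ℕ, (p ^ D).natDegree < m * D + 1 := by
    intro D
    apply Nat.lt_succ_of_le
    calc (p ^ D).natDegree ≤ D * p.natDegree := Polynomial.natDegree_pow_le
      _ ≤ D * m := Nat.mul_le_mul_left D hdegp
      _ = m * D := Nat.mul_comm D m
  have hxpow : ∀ (l : k) (D : ℕ),
      (x l) ^ D = ∑ t ∈ Finset.range (m * D + 1), l ^ t • (p ^ D).coeff t := by
    intro l D
    rw [hxhom l D, Polynomial.eval₂_eq_sum_range' _ (hdegpow D)]
    apply Finset.sum_congr rfl
    intro i _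
    rw [RingHom.id_apply, ← map_pow, ← Algebra.commutes, ← Algebra.smul_def]
  have hxm : ∀ l, x l ∈ F m := by
    intro l
    have h1 := hxpow l 1
    rw [pow_one] at h1
    rw [h1]
    apply Submodule.sum_mem
    intro t htm
    have ht : t ≤ m := by have := Finset.mem_range.mp htm; omega
    have hco : (p ^ 1).coeff t ∈ F t := by rw [pow_one]; exact hcoeff t
    exact Submodule.smul_mem _ _ (hmono ht hco)
  have hFpow : ∀ a : A, a ∈ F m → ∀ i, 1 ≤ i → a ^ i ∈ F (m * i) := by
    intro a ha i hi
    induction i, hi using Nat.le_induction with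
    | base => rw [pow_one, mul_one]; exact ha
    | succ i hi ih =>
      have e : m * (i + 1) = m * i + m := by ring
      rw [pow_succ, e]
      exact hmulF _ _ _ ih _ ha
  -- uncountability: a fixed algebraicity degree for infinitely many scalars
  obtain ⟨d, hdinf⟩ : ∃ d : ℕ, {l : k | 1 ≤ d ∧ (x l) ^ d ∈
      Submodule.span k ((fun i : ℕ => (x l) ^ i) '' Set.Icc 1 (d - 1))}.Infinite := by
    by_contra hcon
    push_neg at hcon
    have hcover : (Set.univ : Set k) ⊆ ⋃ d : ℕ, {l : k | 1 ≤ d ∧ (x l) ^ d ∈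
        Submodule.span k ((fun i : ℕ => (x l) ^ i) '' Set.Icc 1 (d - 1))} := by
      intro l _
      obtain ⟨d, hd1, hd2⟩ := halg (x l)
      exact Set.mem_iUnion.mpr ⟨d, hd1, hd2⟩
    have : (Set.univ : Set k).Countable :=
      Set.Countable.mono hcover (Set.countable_iUnion fun d => (hcon d).countable)
    exact Set.not_countable_univ this
  have hd1 : 1 ≤ d := by
    obtain ⟨l, hl⟩ := hdinf.nonempty
    exact hl.1
  -- the fixed subspace W
  set W : Submodule k A := Submodule.span k
    {a : A | ∃ (l : k) (i : ℕ), i ∈ Set.Icc 1 (d - 1) ∧ a = (x l) ^ i} with hW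
  have hWF : W ≤ F (m * (d - 1)) := by
    rw [hW]
    apply Submodule.span_le.mpr
    rintro a ⟨l, i, hi, rfl⟩
    rw [Set.mem_Icc] at hi
    exact hmono (Nat.mul_le_mul_left m hi.2) (hFpow (x l) (hxm l) i hi.1)
  have hxW : ∀ l ∈ {l : k | 1 ≤ d ∧ (x l) ^ d ∈
      Submodule.span k ((fun i : ℕ => (x l) ^ i) '' Set.Icc 1 (d - 1))},
      ∀ D, 1 ≤ D → (x l) ^ D ∈ W := by
    intro l hl D hD
    have h1 := pow_mem_span_aux (x l) d hd1 hl.2 D hD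
    have h2 : Submodule.span k ((fun i : ℕ => (x l) ^ i) '' Set.Icc 1 (d - 1)) ≤ W := by
      apply Submodule.span_le.mpr
      rintro a ⟨i, hi, rfl⟩
      exact Submodule.subset_span ⟨l, i, hi, rfl⟩
    exact h2 h1
  -- Vandermonde in the quotient A ⧸ W
  have hWcoeff : ∀ t, t < m * (m * (d - 1) + 1) + 1 → (p ^ (m * (d - 1) + 1)).coeff t ∈ W := by
    have hvan := vand_aux hdinf (m * (m * (d - 1) + 1) + 1)
      (fun t => W.mkQ ((p ^ (m * (d - 1) + 1)).coeff t)) ?_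
    · intro t ht
      have h1 := hvan t ht
      rwa [Submodule.mkQ_apply, Submodule.Quotient.mk_eq_zero] at h1
    · intro l hl
      have h1 : ∑ t ∈ Finset.range (m * (m * (d - 1) + 1) + 1),
          l ^ t • W.mkQ ((p ^ (m * (d - 1) + 1)).coeff t)
          = W.mkQ ((x l) ^ (m * (d - 1) + 1)) := by
        rw [hxpow l (m * (d - 1) + 1), map_sum]
        exact Finset.sum_congr rfl fun i _ => (map_smul _ _ _).symm
      rw [h1, Submodule.mkQ_apply, Submodule.Quotient.mk_eq_zero]
      exact hxW l hl _ (by omega)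
  -- conclusion
  refine ⟨m * (d - 1) + 1, ?_⟩
  rw [key (m * (d - 1))]
  apply Finset.sum_eq_zero
  intro t htr
  rcases Nat.lt_or_ge t (m * (d - 1) + 1) with hlt | hge
  · exact phizero _ _ _ (hplow _ t hlt)
  · obtain ⟨u, rfl⟩ : ∃ u, t = u + 1 := ⟨t - 1, by omega⟩
    apply (hker u _).mpr
    have h1 : (p ^ (m * (d - 1) + 1)).coeff (u + 1) ∈ W :=
      hWcoeff (u + 1) (Finset.mem_range.mp htr)
    exact hmono (show m * (d - 1) ≤ u by omega) (hWF h1)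
end

section
/- Suppose |k| ≥ n+1. Then in k⟨x_1,…,x_m⟩, the k-span of the set {(α_1 x_1 + … + α_m x_m)^n : α_1, …, α_m ∈ k} is equal to P_n(x_1,…,x_m). -/
/-- `pWord a i` is the polynomial `p_{i_1,…,i_m}(a_1,…,a_m)`: the sum, over all distinct
words in `m` letters containing exactly `i_j` occurrences of letter `j` for each `j`,
of the corresponding products of `a_1,…,a_m`. -/
noncomputable def pWord {A : Type*} [Ring A] {m : ℕ} (a : Fin m → A) (i : Fin m → ℕ) : A :=
  ∑ w ∈ (Finset.univ : Finset (Fin (∑ j, i j) → Fin m)).filter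
      (fun w => ∀ j, (List.ofFn w).count j = i j),
    ((List.ofFn w).map a).prod

/-- `Pdeg k a n` is `P_n(a_1,…,a_m)`, the `k`-span of
`{p_{i_1,…,i_m}(a_1,…,a_m) : i_1+…+i_m = n}`. -/
noncomputable def Pdeg (k : Type*) [Field k] {A : Type*} [Ring A] [Algebra k A]
    {m : ℕ} (a : Fin m → A) (n : ℕ) : Submodule k A :=
  Submodule.span k {x | ∃ i : Fin m → ℕ, (∑ j, i j) = n ∧ x = pWord a i}

/-- `pWord` with the length of words given as `n` rather than `∑ j, i j`. -/
noncomputable def pN {A : Type*} [Ring A] {m : ℕ} (a : Fin m → A) (n : ℕ) (i : Fin m → ℕ) : A :=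
  ∑ w ∈ (Finset.univ : Finset (Fin n → Fin m)).filter
      (fun w => ∀ j, (List.ofFn w).count j = i j),
    ((List.ofFn w).map a).prod

lemma pWord_eq_pN {A : Type*} [Ring A] {m : ℕ} (a : Fin m → A) {n : ℕ} {i : Fin m → ℕ}
    (h : (∑ j, i j) = n) : pWord a i = pN a n i := by subst h; rfl

/-- The finset of multidegrees of total degree `n`. -/
def degD (m n : ℕ) : Finset (Fin m → ℕ) :=
  (Fintype.piFinset fun _ => Finset.range (n+1)).filter (fun i => ∑ j, i j = n)

lemma list_smul_prod {k A : Type*} [CommSemiring k] [Semiring A] [Algebra k A] {ι : Type*}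
    (c : ι → k) (v : ι → A) :
    ∀ l : List ι, (l.map fun j => c j • v j).prod = (l.map c).prod • (l.map v).prod
  | [] => by simp
  | a :: l => by
    simp only [List.map_cons, List.prod_cons, list_smul_prod c v l, smul_mul_smul_comm]

lemma expand_pow {A : Type*} [Semiring A] {m : ℕ} (a : Fin m → A) :
    ∀ n, (∑ j, a j) ^ n = ∑ w : Fin n → Fin m, ((List.ofFn w).map a).prod
  | 0 => by simp
  | n+1 => by
    have hre : ∑ w : Fin (n+1) → Fin m, ((List.ofFn w).map a).prod
        = ∑ p : Fin m × (Fin n → Fin m), a p.1 * ((List.ofFn p.2).map a).prod := by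
      refine Fintype.sum_equiv (Fin.consEquiv (fun _ : Fin (n+1) => Fin m)).symm _ _ ?_
      intro w
      rw [List.ofFn_succ]
      simp only [Fin.consEquiv_symm_apply, Function.comp]
      rfl
    rw [pow_succ', expand_pow a n, Finset.sum_mul_sum, hre, Fintype.sum_prod_type]

lemma prod_map_count {M : Type*} [CommMonoid M] {m : ℕ} (α : Fin m → M) :
    ∀ l : List (Fin m), (l.map α).prod = ∏ j, α j ^ l.count j
  | [] => by simp
  | a :: l => by
    simp only [List.map_cons, List.prod_cons, prod_map_count α l, List.count_cons, pow_add,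
      Finset.prod_mul_distrib, pow_ite, pow_one, pow_zero, beq_iff_eq, Finset.prod_ite_eq,
      Finset.mem_univ, if_true]
    rw [mul_comm]

lemma sum_count_ofFn {m n : ℕ} (w : Fin n → Fin m) :
    ∑ j, (List.ofFn w).count j = n := by
  have := Multiset.sum_count_eq_card (s := (Finset.univ : Finset (Fin m)))
    (m := (↑(List.ofFn w) : Multiset (Fin m))) (fun a _ => Finset.mem_univ a)
  simpa using this

lemma mem_degD {m n : ℕ} {i : Fin m → ℕ} (h : ∑ j, i j = n) : i ∈ degD m n := by
  refine Finset.mem_filter.mpr ⟨Fintype.mem_piFinset.mpr fun j => ?_, h⟩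
  rw [Finset.mem_range, Nat.lt_succ_iff, ← h]
  exact Finset.single_le_sum (fun j _ => Nat.zero_le _) (Finset.mem_univ j)

lemma key_expand {k : Type*} [Field k] (m n : ℕ) (α : Fin m → k) :
    (∑ j, α j • FreeAlgebra.ι k j) ^ n
      = ∑ i ∈ degD m n, (∏ j, α j ^ i j) • pN (fun j => FreeAlgebra.ι k j) n i := by
  classical
  rw [expand_pow]
  have h1 : ∀ w : Fin n → Fin m,
      ((List.ofFn w).map fun j => α j • FreeAlgebra.ι k j).prod
        = (∏ j, α j ^ (List.ofFn w).count j) •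
            ((List.ofFn w).map fun j => FreeAlgebra.ι k j).prod := by
    intro w
    rw [list_smul_prod, prod_map_count]
  rw [Finset.sum_congr rfl fun w _ => h1 w]
  rw [← Finset.sum_fiberwise_of_maps_to
    (g := fun (w : Fin n → Fin m) (j : Fin m) => (List.ofFn w).count j)
    (fun w _ => mem_degD (sum_count_ofFn w))]
  refine Finset.sum_congr rfl fun i _ => ?_
  rw [pN, Finset.smul_sum]
  rw [show ((Finset.univ : Finset (Fin n → Fin m)).filter
      (fun w => ∀ j, (List.ofFn w).count j = i j))
    = ((Finset.univ : Finset (Fin n → Fin m)).filter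
      (fun w => (fun j => (List.ofFn w).count j) = i)) from by
    simp only [Finset.filter_congr_decidable, funext_iff]]
  refine Finset.sum_congr rfl fun w hw => ?_
  have hc : (fun j => (List.ofFn w).count j) = i := (Finset.mem_filter.mp hw).2
  congr 1
  rw [← hc]

/-- If `|k| ≥ n+1`, then in `k⟨x_1,…,x_m⟩` the span of the `n`-th powers of the linear
forms `α_1 x_1 + … + α_m x_m` equals `P_n(x_1,…,x_m)`. -/
theorem span_pow_linear_eq_Pdeg
    (k : Type*) [Field k] (m n : ℕ) (hcard : (n + 1 : Cardinal) ≤ Cardinal.mk k) :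
    Submodule.span k
        {f : FreeAlgebra k (Fin m) | ∃ α : Fin m → k, f = (∑ j, α j • FreeAlgebra.ι k j) ^ n}
      = Pdeg k (fun j => FreeAlgebra.ι k j) n := by
  classical
  set X : Fin m → FreeAlgebra k (Fin m) := fun j => FreeAlgebra.ι k j with hX
  set W : Submodule k (FreeAlgebra k (Fin m)) :=
    Submodule.span k {f : FreeAlgebra k (Fin m) | ∃ α : Fin m → k,
      f = (∑ j, α j • FreeAlgebra.ι k j) ^ n} with hW
  apply le_antisymm
  · rw [Submodule.span_le]
    rintro f ⟨α, rfl⟩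
    rw [key_expand]
    refine Submodule.sum_mem _ fun i hi => Submodule.smul_mem _ _ (Submodule.subset_span ?_)
    exact ⟨i, (Finset.mem_filter.mp hi).2, (pWord_eq_pN _ (Finset.mem_filter.mp hi).2).symm⟩
  · rw [Pdeg, Submodule.span_le]
    rintro x ⟨i, hi, rfl⟩
    rw [pWord_eq_pN _ hi]
    by_contra hmem
    obtain ⟨φ, hφ1, hφ2⟩ := Submodule.exists_dual_map_eq_bot_of_notMem hmem inferInstance
    have hφW : ∀ f ∈ W, φ f = 0 := by
      intro f hf
      have h2 := Submodule.mem_map_of_mem (f := φ) hf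
      rw [hφ2] at h2
      exact (Submodule.mem_bot _).mp h2
    set Q : MvPolynomial (Fin m) k :=
      ∑ i' ∈ degD m n, MvPolynomial.monomial (Finsupp.equivFunOnFinite.symm i')
        (φ (pN X n i')) with hQ
    have hQeval : ∀ α : Fin m → k, MvPolynomial.eval α Q = 0 := by
      intro α
      have h0 : φ ((∑ j, α j • FreeAlgebra.ι k j) ^ n) = 0 :=
        hφW _ (Submodule.subset_span ⟨α, rfl⟩)
      rw [key_expand, map_sum] at h0
      simp only [map_smul, smul_eq_mul] at h0
      rw [hQ, map_sum]
      rw [← h0]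
      refine Finset.sum_congr rfl fun i' _ => ?_
      rw [MvPolynomial.eval_monomial, Finsupp.prod_pow]
      simp only [Finsupp.coe_equivFunOnFinite_symm]
      rw [mul_comm]
    have hQhom : Q.IsHomogeneous n := by
      refine MvPolynomial.IsHomogeneous.sum _ _ _ fun i' hi' => ?_
      refine MvPolynomial.isHomogeneous_monomial _ ?_
      rw [Finsupp.degree_apply,
        Finset.sum_subset (Finset.subset_univ _)
          (fun x _ hx => Finsupp.notMem_support_iff.mp hx)]
      simp only [Finsupp.coe_equivFunOnFinite_symm]
      exact (Finset.mem_filter.mp hi').2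
    have hQ0 : Q = 0 :=
      hQhom.eq_zero_of_forall_eval_eq_zero_of_le_card hQeval
        (le_trans (by exact_mod_cast Nat.le_succ n) hcard)
    have hcoeff : φ (pN X n i) = 0 := by
      have hc := congrArg (MvPolynomial.coeff (Finsupp.equivFunOnFinite.symm i)) hQ0
      rw [hQ, MvPolynomial.coeff_sum] at hc
      simp only [MvPolynomial.coeff_monomial, MvPolynomial.coeff_zero] at hc
      simp only [EmbeddingLike.apply_eq_iff_eq, Finset.sum_ite_eq', mem_degD hi,
        if_true] at hc
      exact hc
    exact hφ1 hcoeff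
end

section
/- Let D ≥ d ≥ 1, let A be an associative k-algebra with |k| ≥ D+1, and let a_1, …, a_m ∈ A. Assume that for all α_1, …, α_m ∈ k, the element α_1 a_1 + … + α_m a_m is algebraic of degree at most d. Then P_D(a_1,…,a_m) ⊆ P_{≤ d−1}(a_1,…,a_m). -/
open Finset

section vanish
variable {k : Type*} [Field k] {Q : Type*} [AddCommGroup Q] [Module k Q]

lemma uni_vanish {N : ℕ} (x : Fin N → k) (hx : Function.Injective x)
    (v : Fin N → Q) (hv : ∀ t, ∑ s : Fin N, x t ^ (s : ℕ) • v s = 0) : ∀ s, v s = 0 := by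
  classical
  set M : Matrix (Fin N) (Fin N) k := Matrix.vandermonde x with hM
  have hdet : M.det ≠ 0 := by
    rw [hM, Matrix.det_vandermonde]
    refine Finset.prod_ne_zero_iff.mpr fun i _ => Finset.prod_ne_zero_iff.mpr fun j hj => ?_
    rw [Finset.mem_Ioi] at hj
    exact sub_ne_zero.mpr fun hh => (ne_of_gt hj) (hx hh)
  have h1 : M⁻¹ * M = 1 := Matrix.nonsing_inv_mul M (Ne.isUnit hdet)
  intro s
  have key : v s = ∑ t, M⁻¹ s t • (∑ u, M t u • v u) := by
    simp_rw [Finset.smul_sum, smul_smul]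
    rw [Finset.sum_comm]
    simp_rw [← Finset.sum_smul, ← Matrix.mul_apply, h1]
    simp [Matrix.one_apply]
  have hz : ∀ t, ∑ u, M t u • v u = 0 := by
    intro t
    simpa [hM, Matrix.vandermonde_apply] using hv t
  simp [key, hz]

lemma multi_vanish {N : ℕ} (x : Fin N → k) (hx : Function.Injective x) :
    ∀ (m : ℕ) (q : (Fin m → Fin N) → Q),
      (∀ α : Fin m → k, ∑ i : Fin m → Fin N, (∏ j, α j ^ ((i j : ℕ))) • q i = 0) →
      ∀ i, q i = 0 := by
  intro m
  induction m with
  | zero =>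
      intro q hq i
      have h0 := hq (fun j => j.elim0)
      rw [Fintype.sum_subsingleton _ i] at h0
      simpa using h0
  | succ m ih =>
      intro q hq i
      have key : ∀ (t : Fin N) (α : Fin m → k),
          ∑ i' : Fin m → Fin N, (∏ j, α j ^ ((i' j : ℕ))) • q (Fin.cons t i') = 0 := by
        intro t α
        refine uni_vanish x hx
          (fun s => ∑ i' : Fin m → Fin N, (∏ j, α j ^ ((i' j : ℕ))) • q (Fin.cons s i'))
          (fun t' => ?_) t
        have e1 : ∑ i : Fin (m+1) → Fin N, (∏ j, (Fin.cons (x t') α : Fin (m+1) → k) j ^ ((i j : ℕ))) • q i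
            = ∑ s : Fin N, x t' ^ (s : ℕ) •
                ∑ i' : Fin m → Fin N, (∏ j, α j ^ ((i' j : ℕ))) • q (Fin.cons s i') := by
          rw [← Equiv.sum_comp (Fin.consEquiv fun _ : Fin (m+1) => Fin N)
            (fun i : Fin (m+1) → Fin N => (∏ j, (Fin.cons (x t') α : Fin (m+1) → k) j ^ ((i j : ℕ))) • q i), Fintype.sum_prod_type]
          refine Finset.sum_congr rfl fun s _ => ?_
          rw [Finset.smul_sum]
          refine Finset.sum_congr rfl fun i' _ => ?_
          simp only [Fin.consEquiv_apply]
          rw [Fin.prod_univ_succ]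
          simp [mul_smul, Fin.cons_succ, Fin.cons_zero, Fin.consEquiv]
        rw [← e1]
        exact hq (Fin.cons (x t') α)

      have h2 := ih (fun i' => q (Fin.cons (i 0) i')) (key (i 0)) (Fin.tail i)
      rwa [Fin.cons_self_tail] at h2

end vanish

section expand
variable {k : Type*} [Field k] {A : Type*} [Ring A] [Algebra k A] {m : ℕ}

lemma count_sum_eq {D : ℕ} (w : Fin D → Fin m) : (∑ j, (List.ofFn w).count j) = D := by
  classical
  have h1 : ∑ j ∈ (List.ofFn w).toFinset, (List.ofFn w).count j = D := by
    have := Multiset.toFinset_sum_count_eq (↑(List.ofFn w) : Multiset (Fin m))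
    simpa using this
  have h2 := Finset.sum_subset (Finset.subset_univ (List.ofFn w).toFinset)
    (fun x _ hx => List.count_eq_zero.mpr fun hmem => hx (List.mem_toFinset.mpr hmem))
  exact h2.symm.trans h1

lemma prod_count_eq {D : ℕ} (α : Fin m → k) (w : Fin D → Fin m) :
    (∏ t, α (w t)) = ∏ j, α j ^ (List.ofFn w).count j := by
  classical
  have h0 : (∏ t, α (w t)) = ((List.ofFn w).map α).prod := by
    rw [List.map_ofFn, List.prod_ofFn]
    simp [Function.comp]
  rw [h0, Finset.prod_list_map_count]
  refine Finset.prod_subset (Finset.subset_univ _) ?_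
  intro x _ hx
  have : (List.ofFn w).count x = 0 := by
    simpa [List.count_eq_zero] using fun hmem => hx (List.mem_toFinset.mpr hmem)
  simp [this]

lemma pow_sum_expand (a : Fin m → A) (α : Fin m → k) (D : ℕ) :
    (∑ j, α j • a j) ^ D =
      ∑ w : Fin D → Fin m, (∏ t, α (w t)) • ((List.ofFn w).map a).prod := by
  induction D with
  | zero =>
      rw [pow_zero, Fintype.sum_subsingleton _ (Fin.elim0 : Fin 0 → Fin m)]
      simp
  | succ D ih =>
      rw [pow_succ', ih, Finset.mul_sum]
      rw [← Equiv.sum_comp (Fin.consEquiv fun _ : Fin (D+1) => Fin m)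
        (fun w : Fin (D+1) → Fin m => (∏ t, α (w t)) • ((List.ofFn w).map a).prod),
        Fintype.sum_prod_type]
      rw [Finset.sum_comm]
      refine Finset.sum_congr rfl fun w _ => ?_
      rw [Finset.sum_mul]
      refine Finset.sum_congr rfl fun j _ => ?_
      simp only [Fin.consEquiv_apply]
      rw [Fin.prod_univ_succ]
      simp [List.ofFn_succ, Fin.cons_zero, Fin.cons_succ, smul_mul_assoc, mul_smul_comm,
        smul_smul]
      rw [mul_comm]

end expand

section group
variable {k : Type*} [Field k] {A : Type*} [Ring A] [Algebra k A] {m : ℕ}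

lemma pWord_eq (a : Fin m → A) (i : Fin m → ℕ) {D : ℕ} (h : (∑ j, i j) = D) :
    pWord a i = ∑ w ∈ (Finset.univ : Finset (Fin D → Fin m)).filter
        (fun w => ∀ j, (List.ofFn w).count j = i j),
      ((List.ofFn w).map a).prod := by
  subst h; rfl

lemma count_lt {D : ℕ} (w : Fin D → Fin m) (j : Fin m) : (List.ofFn w).count j < D + 1 := by
  have h := List.count_le_length (a := j) (l := List.ofFn w)
  simpa [List.length_ofFn, Nat.lt_succ_iff] using h

lemma pow_grouped (a : Fin m → A) (α : Fin m → k) (D : ℕ) :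
    (∑ j, α j • a j) ^ D =
      ∑ i ∈ (Finset.univ : Finset (Fin m → Fin (D+1))).filter
          (fun i => (∑ j, ((i j : ℕ))) = D),
        (∏ j, α j ^ ((i j : ℕ))) • pWord a (fun j => (i j : ℕ)) := by
  classical
  rw [pow_sum_expand]
  rw [← Finset.sum_fiberwise_of_maps_to
    (t := Finset.univ.filter (fun i : Fin m → Fin (D+1) => (∑ j, ((i j : ℕ))) = D))
    (g := fun (w : Fin D → Fin m) (j : Fin m) => (⟨(List.ofFn w).count j, count_lt w j⟩ : Fin (D+1)))
    (fun w _ => Finset.mem_filter.mpr ⟨Finset.mem_univ _, by simpa using count_sum_eq w⟩)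
    (fun w => (∏ t, α (w t)) • ((List.ofFn w).map a).prod)]
  refine Finset.sum_congr rfl fun i hi => ?_
  rw [Finset.mem_filter] at hi
  rw [pWord_eq a _ hi.2, Finset.smul_sum]
  have hset : (Finset.univ.filter
        (fun w : Fin D → Fin m => (fun j => (⟨(List.ofFn w).count j, count_lt w j⟩ : Fin (D+1))) = i))
      = Finset.univ.filter (fun w : Fin D → Fin m => ∀ j, (List.ofFn w).count j = ((i j : ℕ))) := by
    refine Finset.filter_congr fun w _ => ?_
    simp [funext_iff, Fin.ext_iff]
  rw [hset]
  refine Finset.sum_congr rfl fun w hw => ?_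
  rw [Finset.mem_filter] at hw
  rw [prod_count_eq α w]
  congr 1
  exact Finset.prod_congr rfl fun j _ => by rw [hw.2 j]

end group


/-- Let `D ≥ d ≥ 1` and `|k| ≥ D+1`.  If every `α_1 a_1 + … + α_m a_m` is algebraic of
degree at most `d` (i.e. its `d`-th power is a `k`-linear combination of its powers
`1,…,d-1`), then `P_D(a_1,…,a_m) ⊆ P_{≤ d−1}(a_1,…,a_m)`. -/

theorem Pdeg_le_Ple_of_algebraic_bounded
    (k : Type*) [Field k] (A : Type*) [Ring A] [Algebra k A]
    (m d D : ℕ) (hd : 1 ≤ d) (hD : d ≤ D)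
    (hcard : (D + 1 : Cardinal) ≤ Cardinal.mk k)
    (a : Fin m → A)
    (h : ∀ α : Fin m → k, (∑ j, α j • a j) ^ d ∈
      Submodule.span k ((fun i : ℕ => (∑ j, α j • a j) ^ i) '' Set.Icc 1 (d - 1))) :
    Pdeg k a D ≤ ⨆ n ∈ Finset.Icc 1 (d - 1), Pdeg k a n := by
  classical
  set N : Submodule k A := ⨆ n ∈ Finset.Icc 1 (d - 1), Pdeg k a n with hN
  -- every power of b = ∑ α j • a j in degree range lies in Pdeg k a n
  have hpow_mem : ∀ (α : Fin m → k) (n : ℕ), (∑ j, α j • a j) ^ n ∈ Pdeg k a n := by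
    intro α n
    rw [pow_grouped a α n]
    refine Submodule.sum_mem _ fun i hi => Submodule.smul_mem _ _ (Submodule.subset_span ?_)
    rw [Finset.mem_filter] at hi
    exact ⟨fun j => (i j : ℕ), hi.2, rfl⟩
  -- the span of powers b^1..b^(d-1) lies in N
  have hSN : ∀ α : Fin m → k,
      Submodule.span k ((fun i : ℕ => (∑ j, α j • a j) ^ i) '' Set.Icc 1 (d - 1)) ≤ N := by
    intro α
    rw [Submodule.span_le]
    rintro _ ⟨n, hn, rfl⟩
    have h1 : Pdeg k a n ≤ N := by
      rw [hN]
      exact le_iSup₂_of_le n (by simpa [Finset.mem_Icc] using hn) le_rfl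
    exact h1 (hpow_mem α n)
  -- b^n ∈ span (b^1..b^(d-1)) for all n ≥ 1
  have hbpow : ∀ (α : Fin m → k) (n : ℕ), 1 ≤ n →
      (∑ j, α j • a j) ^ n ∈
        Submodule.span k ((fun i : ℕ => (∑ j, α j • a j) ^ i) '' Set.Icc 1 (d - 1)) := by
    intro α n hn
    set b := ∑ j, α j • a j with hb
    set S := Submodule.span k ((fun i : ℕ => b ^ i) '' Set.Icc 1 (d - 1)) with hS
    have hmul : ∀ x ∈ S, x * b ∈ S := by
      intro x hx
      have : S.map (LinearMap.mulRight k b) ≤ S := by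
        rw [Submodule.map_span, Submodule.span_le]
        rintro _ ⟨_, ⟨n', hn', rfl⟩, rfl⟩
        simp only [LinearMap.mulRight_apply]
        rw [← pow_succ]
        rcases eq_or_lt_of_le hn'.2 with heq | hlt
        · have : n' + 1 = d := by omega
          rw [this]; exact h α
        · exact Submodule.subset_span ⟨n' + 1, ⟨by omega, by omega⟩, rfl⟩
      exact this ⟨x, hx, rfl⟩
    -- strong induction
    induction n with
    | zero => omega
    | succ n ih =>
      rcases Nat.lt_or_ge (n+1) d with hlt | hge
      · exact Submodule.subset_span ⟨n+1, ⟨hn, by omega⟩, rfl⟩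
      · rcases eq_or_lt_of_le hge with heq | hgt
        · rw [← heq] at *; exact h α
        · have hn1 : 1 ≤ n := by omega
          have := ih hn1
          rw [pow_succ]
          exact hmul _ this
  -- quotient argument
  obtain ⟨x⟩ : Nonempty (Fin (D+1) ↪ k) := by
    have h0 : ((D + 1 : ℕ) : Cardinal) ≤ Cardinal.mk k := by
      simpa using hcard
    obtain ⟨S, hS⟩ := Cardinal.le_mk_iff_exists_set.mp h0
    obtain ⟨e⟩ := Cardinal.mk_eq_nat_iff.mp hS
    exact ⟨(e.symm.toEmbedding).trans (Function.Embedding.subtype _)⟩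
  have hx : Function.Injective x := x.injective
  set π := N.mkQ with hπ
  set q : (Fin m → Fin (D+1)) → (A ⧸ N) := fun i =>
    if (∑ j, ((i j : ℕ))) = D then π (pWord a (fun j => (i j : ℕ))) else 0 with hq
  have hqzero : ∀ i, q i = 0 := by
    refine multi_vanish x hx m q fun α => ?_
    rw [← Finset.sum_filter_add_sum_filter_not Finset.univ
      (fun i : Fin m → Fin (D+1) => (∑ j, ((i j : ℕ))) = D)]
    have h2 : ∑ i ∈ Finset.univ.filter
        (fun i : Fin m → Fin (D+1) => ¬ (∑ j, ((i j : ℕ))) = D),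
        (∏ j, α j ^ ((i j : ℕ))) • q i = 0 := by
      refine Finset.sum_eq_zero fun i hi => ?_
      rw [Finset.mem_filter] at hi
      rw [hq]; simp only [if_neg hi.2, smul_zero]
    rw [h2, add_zero]
    have h1 : ∑ i ∈ Finset.univ.filter
        (fun i : Fin m → Fin (D+1) => (∑ j, ((i j : ℕ))) = D),
        (∏ j, α j ^ ((i j : ℕ))) • q i
        = π ((∑ j, α j • a j) ^ D) := by
      rw [pow_grouped a α D, map_sum]
      refine Finset.sum_congr rfl fun i hi => ?_
      rw [Finset.mem_filter] at hi
      rw [hq]; simp only [if_pos hi.2]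
      rw [map_smul]
    rw [h1]
    have hmem : (∑ j, α j • a j) ^ D ∈ N := hSN α (hbpow α D (le_trans hd hD))
    rwa [hπ, Submodule.mkQ_apply, Submodule.Quotient.mk_eq_zero]
  -- conclude
  rw [Pdeg, Submodule.span_le]
  rintro _ ⟨i, hi, rfl⟩
  have hlt : ∀ j, i j < D + 1 := by
    intro j
    have : i j ≤ ∑ j', i j' := Finset.single_le_sum (fun _ _ => Nat.zero_le _) (Finset.mem_univ j)
    omega
  set i' : Fin m → Fin (D+1) := fun j => ⟨i j, hlt j⟩ with hi'
  have hieq : (fun j => ((i' j : ℕ))) = i := by funext j; rfl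
  have hz : (if (∑ j, ((i' j : ℕ))) = D then π (pWord a fun j => ((i' j : ℕ))) else 0) = 0 :=
    hqzero i'
  rw [if_pos (show (∑ j, ((i' j : ℕ))) = D from hi), hieq] at hz
  rw [hπ, Submodule.mkQ_apply, Submodule.Quotient.mk_eq_zero] at hz
  exact hz
end

section
/- Let A be an associative k-algebra and a_1, …, a_m ∈ A. If dim_k P_{≥1}(a_1,…,a_m) < ∞, then the subspace k a_1 + … + k a_m is algebraic of bounded degree, i.e., there exists d ≥ 1 such that every element of k a_1 + … + k a_m is algebraic of degree at most d. -/
section Aux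

variable {k : Type*} [Field k] {A : Type*} [Ring A] [Algebra k A] {m : ℕ}

lemma aux_sum_count (n : ℕ) (w : Fin n → Fin m) : ∑ j, (List.ofFn w).count j = n := by
  classical
  have hlen : (List.ofFn w).length = n := List.length_ofFn
  conv_rhs => rw [← hlen]
  rw [← List.sum_toFinset_count_eq_length]
  exact (Finset.sum_subset (Finset.subset_univ _) (fun x _ hx =>
    List.count_eq_zero_of_not_mem (fun h => hx (List.mem_toFinset.2 h)))).symm

lemma aux_coeff (c : Fin m → k) (l : List (Fin m)) :
    (l.map c).prod = ∏ j, c j ^ l.count j := by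
  classical
  rw [Finset.prod_list_map_count]
  exact Finset.prod_subset (Finset.subset_univ _) (fun x _ hx => by
    rw [List.count_eq_zero_of_not_mem (fun h => hx (List.mem_toFinset.2 h)), pow_zero])

lemma aux_smul_prod (c : Fin m → k) (a : Fin m → A) (l : List (Fin m)) :
    (l.map (fun j => c j • a j)).prod = (l.map c).prod • (l.map a).prod := by
  induction l with
  | nil => simp
  | cons j l ih =>
    rw [List.map_cons, List.map_cons, List.map_cons, List.prod_cons, List.prod_cons,
      List.prod_cons, ih, smul_mul_assoc, mul_smul_comm, mul_smul, smul_comm]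

lemma aux_pow_expand (c : Fin m → k) (a : Fin m → A) (n : ℕ) :
    (∑ j, c j • a j) ^ n
      = ∑ w : Fin n → Fin m, ((List.ofFn w).map c).prod • ((List.ofFn w).map a).prod := by
  induction n with
  | zero => simp
  | succ n ih =>
    rw [pow_succ', ih, Finset.mul_sum]
    rw [← Equiv.sum_comp (Fin.consEquiv (fun _ => Fin m))
      (fun w : Fin (n+1) → Fin m => ((List.ofFn w).map c).prod • ((List.ofFn w).map a).prod)]
    rw [Fintype.sum_prod_type, Finset.sum_comm]
    refine Finset.sum_congr rfl fun w _ => ?_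
    rw [Finset.sum_mul]
    refine Finset.sum_congr rfl fun j _ => ?_
    simp only [Fin.consEquiv_apply, List.ofFn_succ, Fin.cons_zero, Fin.cons_succ,
      List.map_cons, List.prod_cons]
    rw [smul_mul_assoc, mul_smul_comm, mul_smul]

lemma aux_pWord_spec (a : Fin m → A) (i : Fin m → ℕ) (n : ℕ) (h : (∑ j, i j) = n) :
    pWord a i = ∑ w ∈ (Finset.univ : Finset (Fin n → Fin m)).filter
      (fun w => ∀ j, (List.ofFn w).count j = i j), ((List.ofFn w).map a).prod := by
  subst h; rfl

lemma aux_pow_mem_Pdeg (c : Fin m → k) (a : Fin m → A) (n : ℕ) :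
    (∑ j, c j • a j) ^ n ∈ Pdeg k a n := by
  classical
  rw [aux_pow_expand]
  have hmaps : ∀ w ∈ (Finset.univ : Finset (Fin n → Fin m)),
      (fun j => (List.ofFn w).count j) ∈ Fintype.piFinset (fun _ : Fin m => Finset.range (n+1)) := by
    intro w _
    rw [Fintype.mem_piFinset]
    intro j
    rw [Finset.mem_range, Nat.lt_succ_iff]
    calc (List.ofFn w).count j ≤ (List.ofFn w).length := List.count_le_length
      _ = n := List.length_ofFn
  rw [← Finset.sum_fiberwise_of_maps_to hmaps]
  apply Submodule.sum_mem
  intro i _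
  rcases Finset.eq_empty_or_nonempty
    ((Finset.univ : Finset (Fin n → Fin m)).filter
      (fun w => (fun j => (List.ofFn w).count j) = i)) with he | ⟨w0, hw0⟩
  · rw [he, Finset.sum_empty]; exact Submodule.zero_mem _
  · have hw0' : (fun j => (List.ofFn w0).count j) = i := (Finset.mem_filter.1 hw0).2
    have hsum : (∑ j, i j) = n := by
      rw [← hw0']; exact aux_sum_count n w0
    have heq : ∑ w ∈ (Finset.univ : Finset (Fin n → Fin m)).filter
          (fun w => (fun j => (List.ofFn w).count j) = i),
          ((List.ofFn w).map c).prod • ((List.ofFn w).map a).prod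
        = (∏ j, c j ^ i j) • pWord a i := by
      rw [aux_pWord_spec a i n hsum, Finset.smul_sum]
      rw [show ((Finset.univ : Finset (Fin n → Fin m)).filter
          (fun w => (fun j => (List.ofFn w).count j) = i))
        = ((Finset.univ : Finset (Fin n → Fin m)).filter
          (fun w => ∀ j, (List.ofFn w).count j = i j)) from
        Finset.filter_congr (fun w _ => by simp [funext_iff])]
      refine Finset.sum_congr rfl fun w hw => ?_
      have hcount : ∀ j, (List.ofFn w).count j = i j := (Finset.mem_filter.1 hw).2
      rw [aux_coeff]
      congr 1
      exact Finset.prod_congr rfl fun j _ => by rw [hcount j]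
    rw [heq]
    exact Submodule.smul_mem _ _ (Submodule.subset_span ⟨i, hsum, rfl⟩)

lemma aux_mul_right_mem (u : A) (n : ℕ) (hstab : u ^ (n + 1) ∈
      Submodule.span k ((fun i : ℕ => u ^ i) '' Set.Icc 1 n))
    (x : A) (hx : x ∈ Submodule.span k ((fun i : ℕ => u ^ i) '' Set.Icc 1 n)) :
    x * u ∈ Submodule.span k ((fun i : ℕ => u ^ i) '' Set.Icc 1 n) := by
  induction hx using Submodule.span_induction with
  | mem x hxm =>
    obtain ⟨i, ⟨hi1, hi2⟩, rfl⟩ := hxm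
    rw [← pow_succ]
    rcases eq_or_lt_of_le hi2 with h | h
    · rw [h]; exact hstab
    · exact Submodule.subset_span ⟨i + 1, ⟨le_trans hi1 (Nat.le_succ i), h⟩, rfl⟩
  | zero => rw [zero_mul]; exact Submodule.zero_mem _
  | add x y _ _ hx hy => rw [add_mul]; exact Submodule.add_mem _ hx hy
  | smul r x _ hx => rw [smul_mul_assoc]; exact Submodule.smul_mem _ _ hx

lemma aux_stab (u : A) (n : ℕ) (hstab : u ^ (n + 1) ∈
      Submodule.span k ((fun i : ℕ => u ^ i) '' Set.Icc 1 n)) (t : ℕ) (ht : n + 1 ≤ t) :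
    u ^ t ∈ Submodule.span k ((fun i : ℕ => u ^ i) '' Set.Icc 1 n) := by
  induction t with
  | zero => omega
  | succ t ih =>
    rcases eq_or_lt_of_le ht with h | h
    · rw [← h]; exact hstab
    · have := ih (by omega)
      rw [pow_succ]
      exact aux_mul_right_mem u n hstab _ this

end Aux

/-- If `dim_k P_{≥1}(a_1,…,a_m) < ∞`, then the subspace `k a_1 + … + k a_m` is algebraic
of bounded degree: there exists `d ≥ 1` such that every element of `k a_1 + … + k a_m`
is algebraic of degree at most `d`. -/
theorem algebraic_bounded_of_finiteDimensional_Pge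
    (k : Type*) [Field k] (A : Type*) [Ring A] [Algebra k A]
    (m : ℕ) (a : Fin m → A)
    (h : FiniteDimensional k ↥(⨆ n ∈ Set.Ici 1, Pdeg k a n)) :
    ∃ d : ℕ, 1 ≤ d ∧ ∀ u ∈ Submodule.span k (Set.range a),
      u ^ d ∈ Submodule.span k ((fun i : ℕ => u ^ i) '' Set.Icc 1 (d - 1)) := by
  classical
  set P : Submodule k A := ⨆ n ∈ Set.Ici 1, Pdeg k a n with hP
  set D : ℕ := Module.finrank k P with hD
  refine ⟨D + 1, le_add_self, fun u hu => ?_⟩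
  obtain ⟨c, rfl⟩ := (Submodule.mem_span_range_iff_exists_fun k).1 hu
  set v : A := ∑ j, c j • a j with hv
  -- every positive power of v lies in P
  have hpow : ∀ t : ℕ, 1 ≤ t → v ^ t ∈ P := by
    intro t ht
    have h1 : Pdeg k a t ≤ P := le_iSup₂ (f := fun n _ => Pdeg k a n) t ht
    exact h1 (aux_pow_mem_Pdeg c a t)
  -- the chain of spans
  set W : ℕ → Submodule k A := fun n => Submodule.span k ((fun i : ℕ => v ^ i) '' Set.Icc 1 n)
    with hW
  have hWle : ∀ n, W n ≤ P := by
    intro n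
    apply Submodule.span_le.2
    rintro x ⟨i, ⟨hi1, _⟩, rfl⟩
    exact hpow i hi1
  have hWmono : ∀ {n n' : ℕ}, n ≤ n' → W n ≤ W n' :=
    fun hnn' => Submodule.span_mono (Set.image_mono (Set.Icc_subset_Icc_right hnn'))
  have hWfd : ∀ n, FiniteDimensional k (W n) :=
    fun n => Submodule.finiteDimensional_of_le (hWle n)
  simp only [Nat.add_sub_cancel]
  by_contra hcon
  -- then the chain is strictly increasing up to D+1
  have hkey : ∀ n, n ≤ D → v ^ (n + 1) ∉ W n := by
    intro n hn hmem
    rcases Nat.eq_zero_or_pos n with rfl | hn1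
    · -- W 0 = ⊥, so v = 0
      have : W 0 = ⊥ := by
        rw [hW]; simp [Set.Icc_eq_empty_of_lt]
      rw [this, Submodule.mem_bot, pow_one] at hmem
      exact hcon (by rw [hmem, zero_pow (Nat.succ_ne_zero D)]; exact Submodule.zero_mem _)
    · exact hcon (hWmono hn (aux_stab v n hmem (D + 1) (by omega)))
  have hrank : ∀ n, n ≤ D + 1 → n ≤ Module.finrank k (W n) := by
    intro n hn
    induction n with
    | zero => exact Nat.zero_le _
    | succ n ih =>
      have hlt : W n < W (n + 1) := by
        refine lt_of_le_of_ne (hWmono (Nat.le_succ n)) (fun heq => ?_)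
        exact hkey n (by omega) (heq ▸ Submodule.subset_span ⟨n + 1, ⟨Nat.le_add_left 1 n, le_refl _⟩, rfl⟩)
      have : FiniteDimensional k (W (n+1)) := hWfd (n+1)
      have := Submodule.finrank_lt_finrank_of_lt hlt
      have := ih (by omega)
      omega
  have h1 : D + 1 ≤ Module.finrank k (W (D + 1)) := hrank (D + 1) (le_refl _)
  have h2 : Module.finrank k (W (D + 1)) ≤ D := by
    rw [hD]
    exact Submodule.finrank_mono (hWle (D + 1))
  omega
end

section
/- Let k be an infinite field and let A be an associative k-algebra with filtration {F_n}_{n≥0}, and let B = gr(A) be the associated graded algebra. If A is locally of bounded degree (LBD), then gr(A)_{≥1} is locally of bounded index (LBI). -/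
open Finset Polynomial

private lemma sum_box_antidiag {β : Type*} [AddCommMonoid β] (D D' : ℕ) (h : ℕ → ℕ → β)
    (hD : ∀ e f, D ≤ e → h e f = 0) (hD' : ∀ e f, D' ≤ f → h e f = 0) :
    (∑ g ∈ Finset.range (D + D'), ∑ p ∈ Finset.HasAntidiagonal.antidiagonal g, h p.1 p.2)
      = ∑ e ∈ Finset.range D, ∑ f ∈ Finset.range D', h e f := by
  classical
  rw [Finset.sum_sigma', ← Finset.sum_product']
  have hfil : ∑ x ∈ (Finset.range (D + D')).sigma (fun g => Finset.HasAntidiagonal.antidiagonal g)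
        |>.filter (fun x => x.2.1 < D ∧ x.2.2 < D'), h x.2.1 x.2.2
      = ∑ x ∈ (Finset.range (D + D')).sigma (fun g => Finset.HasAntidiagonal.antidiagonal g), h x.2.1 x.2.2 := by
    apply Finset.sum_filter_of_ne
    rintro ⟨g, e, f⟩ _ hne
    by_contra hc
    push_neg at hc
    rcases Nat.lt_or_ge e D with he | he
    · exact hne (hD' e f (hc he))
    · exact hne (hD e f he)
  rw [← hfil]
  refine Finset.sum_nbij' (fun x => x.2) (fun p => ⟨p.1 + p.2, p⟩) ?_ ?_ ?_ ?_ ?_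
  · rintro ⟨g, e, f⟩ hx
    simp only [Finset.mem_filter, Finset.mem_sigma, Finset.mem_range,
      Finset.HasAntidiagonal.mem_antidiagonal] at hx
    simp only [Finset.mem_product, Finset.mem_range]
    exact hx.2
  · rintro ⟨e, f⟩ hp
    simp only [Finset.mem_product, Finset.mem_range] at hp
    simp only [Finset.mem_filter, Finset.mem_sigma, Finset.mem_range,
      Finset.HasAntidiagonal.mem_antidiagonal]
    exact ⟨⟨by omega, trivial⟩, hp.1, hp.2⟩
  · rintro ⟨g, e, f⟩ hx
    simp only [Finset.mem_filter, Finset.mem_sigma, Finset.mem_range,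
      Finset.HasAntidiagonal.mem_antidiagonal] at hx
    obtain ⟨⟨-, hg⟩, -⟩ := hx
    subst hg
    rfl
  · rintro ⟨e, f⟩ _; rfl
  · rintro ⟨g, e, f⟩ _; rfl

private lemma coeffs_zero_of_forall_eval_zero (k : Type*) [Field k] [Infinite k]
    (V : Type*) [AddCommGroup V] [Module k V] (L : ℕ) (g : ℕ → V)
    (h : ∀ c : k, ∑ e ∈ Finset.range L, c ^ e • g e = 0) : ∀ e < L, g e = 0 := by
  intro e he
  rw [← Module.forall_dual_apply_eq_zero_iff k]
  intro f
  set P : Polynomial k := ∑ e' ∈ Finset.range L, Polynomial.monomial e' (f (g e')) with hP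
  have hPz : P = 0 := by
    apply Polynomial.zero_of_eval_zero
    intro c
    rw [hP, Polynomial.eval_finset_sum]
    simp only [Polynomial.eval_monomial]
    have h2 := congrArg f (h c)
    rw [map_sum, map_zero] at h2
    simpa [f.map_smul, smul_eq_mul, mul_comm] using h2
  have h3 : P.coeff e = f (g e) := by
    rw [hP, Polynomial.finset_sum_coeff]
    simp only [Polynomial.coeff_monomial]
    rw [Finset.sum_ite_eq' (Finset.range L) e fun e' => f (g e')]
    simp [he]
  rw [hPz] at h3
  simpa using h3.symm

private lemma pow_mem_span_pows {k A : Type*} [Field k] [Ring A] [Algebra k A]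
    (x : A) (d : ℕ) (hd : 1 ≤ d)
    (hx : x ^ d ∈ Submodule.span k ((fun i : ℕ => x ^ i) '' Set.Icc 1 (d - 1))) :
    ∀ N, 1 ≤ N → x ^ N ∈ Submodule.span k ((fun i : ℕ => x ^ i) '' Set.Icc 1 (d - 1)) := by
  set Sp := Submodule.span k ((fun i : ℕ => x ^ i) '' Set.Icc 1 (d - 1)) with hSp
  have hmulx : ∀ y ∈ Sp, y * x ∈ Sp := by
    intro y hy
    induction hy using Submodule.span_induction with
    | mem y hy =>
        obtain ⟨i, ⟨hi1, hi2⟩, rfl⟩ := hy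
        simp only
        rw [← pow_succ]
        rcases Nat.lt_or_ge (i + 1) d with h1 | h1
        · exact Submodule.subset_span ⟨i + 1, ⟨by omega, by omega⟩, rfl⟩
        · have : i + 1 = d := by omega
          rw [this]; exact hx
    | zero => simp
    | add a b _ _ ha hb => rw [add_mul]; exact Submodule.add_mem _ ha hb
    | smul c a _ ha => rw [smul_mul_assoc]; exact Submodule.smul_mem _ _ ha
  intro N hN
  induction N, hN using Nat.le_induction with
  | base =>
      rcases Nat.lt_or_ge 1 d with h1 | h1
      · exact Submodule.subset_span ⟨1, ⟨le_refl 1, by omega⟩, by simp⟩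
      · have : d = 1 := by omega
        subst this
        simpa using hx
  | succ N hN ih =>
      rw [pow_succ]
      exact hmulx _ ih


open Finset Polynomial

section PsiPhi

variable {k A B : Type*} [Field k] [Ring A] [Algebra k A] [Ring B] [Algebra k B]
variable (F : ℕ → Submodule k A) (φ : ∀ n : ℕ, F n →ₗ[k] B)

open Classical in
private noncomputable def psi (x : A) (n : ℕ) : B :=
  if h : x ∈ F n then φ n ⟨x, h⟩ else 0

private lemma psi_apply {x : A} {n : ℕ} (h : x ∈ F n) : psi F φ x n = φ n ⟨x, h⟩ :=
  dif_pos h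

private lemma psi_zero (n : ℕ) : psi F φ 0 n = 0 := by
  rw [psi_apply F φ (zero_mem _)]
  have h : (⟨0, (F n).zero_mem⟩ : F n) = 0 := rfl
  rw [h, map_zero]

private lemma psi_add {x y : A} {n : ℕ} (hx : x ∈ F n) (hy : y ∈ F n) :
    psi F φ (x + y) n = psi F φ x n + psi F φ y n := by
  rw [psi_apply F φ hx, psi_apply F φ hy, psi_apply F φ (add_mem hx hy), ← map_add]
  rfl

private lemma psi_sum {ι : Type*} (t : Finset ι) (u : ι → A) {n : ℕ}
    (hu : ∀ i ∈ t, u i ∈ F n) :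
    psi F φ (∑ i ∈ t, u i) n = ∑ i ∈ t, psi F φ (u i) n := by
  classical
  induction t using Finset.induction_on with
  | empty => simpa using psi_zero F φ n
  | @insert a t ha ih =>
      rw [Finset.sum_insert ha, Finset.sum_insert ha,
        psi_add F φ (hu a (Finset.mem_insert_self a t))
          (sum_mem fun i hi => hu i (Finset.mem_insert_of_mem hi)),
        ih fun i hi => hu i (Finset.mem_insert_of_mem hi)]

private noncomputable def Phi (q : Polynomial A) (D : ℕ) : B :=
  ∑ e ∈ Finset.range D, psi F φ (q.coeff e) e

private lemma Phi_def (q : Polynomial A) (D : ℕ) :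
    Phi F φ q D = ∑ e ∈ Finset.range D, psi F φ (q.coeff e) e := rfl

variable (hmulF : ∀ i j : ℕ, ∀ x ∈ F i, ∀ y ∈ F j, x * y ∈ F (i + j))

private lemma psi_mul
    (hmulφ : ∀ p q : ℕ, ∀ x : F p, ∀ y : F q,
      φ p x * φ q y = φ (p + q) ⟨(x : A) * (y : A), hmulF p q _ x.2 _ y.2⟩)
    {x y : A} {p q : ℕ} (hx : x ∈ F p) (hy : y ∈ F q) :
    psi F φ x p * psi F φ y q = psi F φ (x * y) (p + q) := by
  rw [psi_apply F φ hx, psi_apply F φ hy, psi_apply F φ (hmulF p q x hx y hy), hmulφ]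

private lemma Phi_mul
    (hmulφ : ∀ p q : ℕ, ∀ x : F p, ∀ y : F q,
      φ p x * φ q y = φ (p + q) ⟨(x : A) * (y : A), hmulF p q _ x.2 _ y.2⟩)
    (q r : Polynomial A) (hq : ∀ e, q.coeff e ∈ F e) (hr : ∀ e, r.coeff e ∈ F e)
    (Dq Dr : ℕ) (hdq : q.natDegree < Dq) (hdr : r.natDegree < Dr) :
    Phi F φ q Dq * Phi F φ r Dr = Phi F φ (q * r) (Dq + Dr) := by
  rw [Phi_def, Phi_def, Phi_def, Finset.sum_mul_sum]
  calc ∑ e ∈ Finset.range Dq, ∑ f ∈ Finset.range Dr,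
        psi F φ (q.coeff e) e * psi F φ (r.coeff f) f
      = ∑ e ∈ Finset.range Dq, ∑ f ∈ Finset.range Dr,
          psi F φ (q.coeff e * r.coeff f) (e + f) := by
        exact Finset.sum_congr rfl fun e _ => Finset.sum_congr rfl fun f _ =>
          psi_mul F φ hmulF hmulφ (hq e) (hr f)
    _ = ∑ g ∈ Finset.range (Dq + Dr), ∑ pr ∈ Finset.HasAntidiagonal.antidiagonal g,
          psi F φ (q.coeff pr.1 * r.coeff pr.2) (pr.1 + pr.2) := by
        refine (sum_box_antidiag Dq Dr _ ?_ ?_).symm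
        · intro e f he
          rw [Polynomial.coeff_eq_zero_of_natDegree_lt (lt_of_lt_of_le hdq he), zero_mul,
            psi_zero]
        · intro e f hf
          rw [Polynomial.coeff_eq_zero_of_natDegree_lt (lt_of_lt_of_le hdr hf), mul_zero,
            psi_zero]
    _ = ∑ g ∈ Finset.range (Dq + Dr), psi F φ ((q * r).coeff g) g := by
        refine Finset.sum_congr rfl fun g _ => ?_
        have hmem : ∀ pr ∈ Finset.HasAntidiagonal.antidiagonal g, q.coeff pr.1 * r.coeff pr.2 ∈ F g := by
          intro pr hpr
          rw [Finset.HasAntidiagonal.mem_antidiagonal] at hpr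
          rw [← hpr]
          exact hmulF _ _ _ (hq pr.1) _ (hr pr.2)
        rw [Polynomial.coeff_mul, psi_sum F φ _ _ hmem]
        refine Finset.sum_congr rfl fun pr hpr => ?_
        rw [Finset.HasAntidiagonal.mem_antidiagonal] at hpr
        rw [hpr]

end PsiPhi

/-- Let `k` be an infinite field and `A` an associative `k`-algebra with filtration
`F_0 ⊆ F_1 ⊆ ⋯` (an increasing chain of `k`-subspaces with `⋃ F_i = A` and
`F_i F_j ⊆ F_{i+j}`).  If `A` is locally of bounded degree (LBD), then `gr(A)_{≥1}`
is locally of bounded index (LBI).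

The associated graded algebra `gr(A) = ⊕_{n≥0} F_n/F_{n−1}` (with `F_{−1} = 0`) is
presented by an algebra `B` together with `k`-linear maps `φ n : F n → B` realizing the
quotient maps `F_n → F_n/F_{n−1} ⊆ gr(A)`: the kernel of `φ n` is exactly `F_{n-1}`
(with `φ 0` injective), and `φ p x * φ q y = φ (p+q) (x*y)`, which encodes the
multiplication of `gr(A)`.  Then `gr(A)_{≥1} = ⨆ n, range (φ (n+1))`, and LBI for it
says: every finite-dimensional `k`-subspace `S` of `gr(A)_{≥1}` has bounded index. -/
theorem gr_LBI_of_LBD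
    (k : Type*) [Field k] [Infinite k]
    (A : Type*) [Ring A] [Algebra k A]
    (F : ℕ → Submodule k A)
    (hmono : Monotone F)
    (hexh : ∀ a : A, ∃ n : ℕ, a ∈ F n)
    (hmulF : ∀ i j : ℕ, ∀ x ∈ F i, ∀ y ∈ F j, x * y ∈ F (i + j))
    (B : Type*) [Ring B] [Algebra k B]
    (φ : ∀ n : ℕ, F n →ₗ[k] B)
    (hker0 : ∀ x : F 0, φ 0 x = 0 ↔ (x : A) = 0)
    (hker : ∀ n : ℕ, ∀ x : F (n + 1), φ (n + 1) x = 0 ↔ (x : A) ∈ F n)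
    (hmulφ : ∀ p q : ℕ, ∀ x : F p, ∀ y : F q,
      φ p x * φ q y = φ (p + q) ⟨(x : A) * (y : A), hmulF p q _ x.2 _ y.2⟩)
    (hLBD : ∀ S : Submodule k A, FiniteDimensional k S → ∃ d : ℕ, 1 ≤ d ∧
      ∀ s ∈ S, s ^ d ∈ Submodule.span k ((fun i : ℕ => s ^ i) '' Set.Icc 1 (d - 1))) :
    ∀ S : Submodule k B, S ≤ (⨆ n : ℕ, LinearMap.range (φ (n + 1))) →
      FiniteDimensional k S → ∃ N : ℕ, ∀ s ∈ S, s ^ N = 0 := by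
  classical
  intro S hSle hSfd
  obtain ⟨G, hG⟩ : S.FG := (Submodule.fg_iff_finiteDimensional S).mpr hSfd
  -- representation of generators as finite sums of homogeneous elements
  have hrep : ∀ g ∈ G, ∃ f : ℕ →₀ B, (∀ n, f n ∈ LinearMap.range (φ (n + 1))) ∧
      (f.sum fun _ m => m) = g := by
    intro g hg
    have hgS : g ∈ ⨆ n : ℕ, LinearMap.range (φ (n + 1)) := by
      refine hSle ?_
      rw [← hG]
      exact Submodule.subset_span hg
    exact (Submodule.mem_iSup_iff_exists_finsupp _ _).mp hgS
  choose! f hf1 hf2 using hrep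
  have hlift : ∀ g ∈ G, ∀ n : ℕ, ∃ x : F (n + 1), φ (n + 1) x = f g n := by
    intro g hg n
    exact hf1 g hg n
  choose! xg hxg using hlift
  -- degree bound
  set M : ℕ := (G.sup fun g => (f g).support.sup id) + 1 with hM
  have hsupp : ∀ g ∈ G, ∀ n, M ≤ n → f g n = 0 := by
    intro g hg n hn
    by_contra h0
    have h1 : n ∈ (f g).support := Finsupp.mem_support_iff.mpr h0
    have h2 : (id n : ℕ) ≤ (f g).support.sup id := Finset.le_sup h1
    have h3 : (f g).support.sup id ≤ G.sup fun g => (f g).support.sup id :=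
      Finset.le_sup (f := fun g => (f g).support.sup id) hg
    simp only [id] at h2
    omega
  have hgsum : ∀ g ∈ G, (∑ n ∈ Finset.range M, φ (n + 1) (xg g n)) = g := by
    intro g hg
    have h1 : (f g).support ⊆ Finset.range M := by
      intro n hn
      rw [Finset.mem_range]
      by_contra h
      exact Finsupp.mem_support_iff.mp hn (hsupp g hg n (by omega))
    calc ∑ n ∈ Finset.range M, φ (n + 1) (xg g n)
        = ∑ n ∈ Finset.range M, f g n :=
          Finset.sum_congr rfl fun n _ => hxg g hg n
      _ = ∑ n ∈ (f g).support, f g n :=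
          (Finset.sum_subset h1 fun n _ hn => Finsupp.notMem_support_iff.mp hn).symm
      _ = g := hf2 g hg
  -- the finite-dimensional subspace of A
  set T : Finset A := (G.attach ×ˢ Finset.range M).image
    (fun pr => ((xg pr.1.1 pr.2 : F (pr.2 + 1)) : A)) with hT
  set W : Submodule k A := Submodule.span k (T : Set A) with hW
  obtain ⟨d, hd1, hdW⟩ := hLBD W inferInstance
  set K : ℕ := (d - 1) * M with hK
  refine ⟨K + 1, ?_⟩
  intro s hs
  have hs' : s ∈ Submodule.span k (G : Set B) := by rw [hG]; exact hs
  obtain ⟨c, -, hc⟩ := Submodule.mem_span_finset.mp hs'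
  -- the lifted coefficients
  set a : (n : ℕ) → F (n + 1) := fun n => ∑ g ∈ G, c g • xg g n with ha
  have haW : ∀ n, n < M → ((a n : A)) ∈ W := by
    intro n hn
    have hco : ((a n : A)) = ∑ g ∈ G, c g • ((xg g n : F (n + 1)) : A) := by
      rw [ha]
      push_cast
      rfl
    rw [hco]
    refine sum_mem fun g hg => Submodule.smul_mem _ _ ?_
    refine Submodule.subset_span ?_
    rw [hT]
    refine Finset.mem_coe.mpr (Finset.mem_image.mpr ⟨(⟨g, hg⟩, n), ?_, rfl⟩)
    simp [Finset.mem_product, Finset.mem_range, hn]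
  have hsa : s = ∑ n ∈ Finset.range M, φ (n + 1) (a n) := by
    rw [← hc]
    calc ∑ g ∈ G, c g • g
        = ∑ g ∈ G, ∑ n ∈ Finset.range M, c g • φ (n + 1) (xg g n) := by
          refine Finset.sum_congr rfl fun g hg => ?_
          rw [← Finset.smul_sum, hgsum g hg]
      _ = ∑ n ∈ Finset.range M, ∑ g ∈ G, c g • φ (n + 1) (xg g n) := Finset.sum_comm
      _ = ∑ n ∈ Finset.range M, φ (n + 1) (a n) := by
          refine Finset.sum_congr rfl fun n _ => ?_
          rw [ha, map_sum]
          exact Finset.sum_congr rfl fun g _ => (map_smul (φ (n + 1)) (c g) (xg g n)).symm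
  -- the polynomial encoding the weight decomposition
  set p : Polynomial A := ∑ n ∈ Finset.range M, Polynomial.monomial (n + 1) ((a n : A))
    with hp
  have hpco : ∀ e, p.coeff e ∈ F e := by
    intro e
    rw [hp, Polynomial.finset_sum_coeff]
    refine sum_mem fun m hm => ?_
    rw [Polynomial.coeff_monomial]
    split_ifs with h
    · rw [← h]; exact (a m).2
    · exact zero_mem _
  have hpc : ∀ n, n ∈ Finset.range M → p.coeff (n + 1) = ((a n : A)) := by
    intro n hn
    rw [hp, Polynomial.finset_sum_coeff]
    simp only [Polynomial.coeff_monomial, add_left_inj]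
    rw [Finset.sum_ite_eq' (Finset.range M) n fun m => ((a m : A))]
    simp [hn]
  have hpc0 : p.coeff 0 = 0 := by
    rw [hp, Polynomial.finset_sum_coeff]
    simp
  have hpdeg : p.natDegree < M + 1 := by
    have h1 : p.natDegree ≤ M := by
      rw [hp]
      refine Polynomial.natDegree_sum_le_of_forall_le _ _ fun n hn => ?_
      exact le_trans (Polynomial.natDegree_monomial_le _) (Finset.mem_range.mp hn)
    omega
  have hsPhi : s = Phi F φ p (M + 1) := by
    rw [Phi_def, Finset.sum_range_succ']
    rw [hpc0, psi_zero F φ 0, add_zero]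
    rw [hsa]
    refine Finset.sum_congr rfl fun n hn => ?_
    rw [hpc n hn, psi_apply F φ (a n).2]
  have hpowco : ∀ N, 1 ≤ N → ∀ e, (p ^ N).coeff e ∈ F e := by
    intro N hN
    induction N, hN using Nat.le_induction with
    | base => rw [pow_one]; exact hpco
    | succ N hN ih =>
        intro e
        rw [pow_succ, Polynomial.coeff_mul]
        refine sum_mem fun pr hpr => ?_
        rw [Finset.HasAntidiagonal.mem_antidiagonal] at hpr
        rw [← hpr]
        exact hmulF _ _ _ (ih pr.1) _ (hpco pr.2)
  have hdegpow : ∀ N, 1 ≤ N → (p ^ N).natDegree < N * (M + 1) := by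
    intro N hN
    have h1 : (p ^ N).natDegree ≤ N * p.natDegree := Polynomial.natDegree_pow_le
    have h2 : N * p.natDegree ≤ N * M := Nat.mul_le_mul_left N (by omega)
    have h3 : N * (M + 1) = N * M + N := by ring
    omega
  have hsPow : ∀ N, 1 ≤ N → s ^ N = Phi F φ (p ^ N) (N * (M + 1)) := by
    intro N hN
    induction N, hN using Nat.le_induction with
    | base => rw [pow_one, pow_one, one_mul]; exact hsPhi
    | succ N hN ih =>
        calc s ^ (N + 1) = s ^ N * s := pow_succ s N
          _ = Phi F φ (p ^ N) (N * (M + 1)) * Phi F φ p (M + 1) := by rw [ih, ← hsPhi]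
          _ = Phi F φ (p ^ N * p) (N * (M + 1) + (M + 1)) :=
              Phi_mul F φ hmulF hmulφ _ _ (hpowco N hN) hpco _ _ (hdegpow N hN) hpdeg
          _ = Phi F φ (p ^ (N + 1)) ((N + 1) * (M + 1)) := by
              rw [← pow_succ]
              congr 1
              ring
  have hlow : ∀ N e, e < N → (p ^ N).coeff e = 0 := by
    intro N
    induction N with
    | zero => intro e he; omega
    | succ N ih =>
        intro e he
        rw [pow_succ, Polynomial.coeff_mul]
        refine Finset.sum_eq_zero fun pr hpr => ?_
        rw [Finset.HasAntidiagonal.mem_antidiagonal] at hpr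
        by_cases hi : pr.1 < N
        · rw [ih pr.1 hi, zero_mul]
        · have hj : pr.2 = 0 := by omega
          rw [hj, hpc0, mul_zero]
  -- evaluation at scalars and the Vandermonde argument
  set DN : ℕ := (K + 1) * (M + 1) with hDN
  have hdegNN : (p ^ (K + 1)).natDegree < DN := hdegpow (K + 1) (by omega)
  have hEval : ∀ cc : k, (∑ e ∈ Finset.range DN, cc ^ e • (p ^ (K + 1)).coeff e) ∈ F K := by
    intro cc
    have hcomm : ∀ y : A, Commute ((RingHom.id A) y) (algebraMap k A cc) :=
      fun y => (Algebra.commutes cc y).symm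
    set E := Polynomial.eval₂RingHom' (RingHom.id A) (algebraMap k A cc) hcomm with hE
    have hEp : E p = ∑ n ∈ Finset.range M, cc ^ (n + 1) • ((a n : A)) := by
      rw [hp, map_sum]
      refine Finset.sum_congr rfl fun n _ => ?_
      show Polynomial.eval₂ (RingHom.id A) (algebraMap k A cc)
        (Polynomial.monomial (n + 1) ((a n : A))) = _
      rw [Polynomial.eval₂_monomial]
      simp only [RingHom.id_apply]
      rw [← map_pow, ← Algebra.commutes, ← Algebra.smul_def]
    have hEpW : E p ∈ W := by
      rw [hEp]
      exact sum_mem fun n hn => Submodule.smul_mem _ _ (haW n (Finset.mem_range.mp hn))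
    have hEpM : E p ∈ F M := by
      rw [hEp]
      refine sum_mem fun n hn => Submodule.smul_mem _ _ ?_
      exact hmono (Finset.mem_range.mp hn) (a n).2
    have hpowF : ∀ j, 1 ≤ j → (E p) ^ j ∈ F (j * M) := by
      intro j hj
      induction j, hj using Nat.le_induction with
      | base => rw [pow_one, one_mul]; exact hEpM
      | succ j hj ih =>
          have h1 := hmulF (j * M) M _ ih _ hEpM
          have h2 : (j + 1) * M = j * M + M := by ring
          rw [pow_succ, h2]
          exact h1
    have hspan_le : Submodule.span k ((fun i : ℕ => (E p) ^ i) '' Set.Icc 1 (d - 1)) ≤ F K := by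
      rw [Submodule.span_le]
      rintro _ ⟨i, ⟨hi1, hi2⟩, rfl⟩
      exact hmono (Nat.mul_le_mul_right M hi2) (hpowF i hi1)
    have hfin : (E p) ^ (K + 1) ∈ F K :=
      hspan_le (pow_mem_span_pows (E p) d hd1 (hdW (E p) hEpW) (K + 1) (by omega))
    have h4 : E (p ^ (K + 1)) = ∑ e ∈ Finset.range DN,
        (p ^ (K + 1)).coeff e * (algebraMap k A cc) ^ e := by
      show Polynomial.eval₂ (RingHom.id A) (algebraMap k A cc) (p ^ (K + 1)) = _
      rw [Polynomial.eval₂_eq_sum_range' (RingHom.id A) hdegNN]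
      simp only [RingHom.id_apply]
    have h5 : (∑ e ∈ Finset.range DN, cc ^ e • (p ^ (K + 1)).coeff e) = (E p) ^ (K + 1) := by
      rw [← map_pow, h4]
      refine Finset.sum_congr rfl fun e _ => ?_
      rw [← map_pow, ← Algebra.commutes, ← Algebra.smul_def]
    rw [h5]
    exact hfin
  have hcoK : ∀ e, (p ^ (K + 1)).coeff e ∈ F K := by
    intro e
    by_cases heD : e < DN
    · have hvan : ∀ e' < DN,
          (Submodule.Quotient.mk ((p ^ (K + 1)).coeff e') : A ⧸ F K) = 0 := by
        refine coeffs_zero_of_forall_eval_zero k (A ⧸ F K) DN _ ?_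
        intro cc
        have h6 := hEval cc
        have h7 : (∑ e' ∈ Finset.range DN,
            cc ^ e' • (Submodule.Quotient.mk ((p ^ (K + 1)).coeff e') : A ⧸ F K))
            = (F K).mkQ (∑ e' ∈ Finset.range DN, cc ^ e' • (p ^ (K + 1)).coeff e') := by
          rw [map_sum]
          refine Finset.sum_congr rfl fun e' _ => ?_
          rw [map_smul, Submodule.mkQ_apply]
        rw [h7, Submodule.mkQ_apply, Submodule.Quotient.mk_eq_zero]
        exact h6
      exact (Submodule.Quotient.mk_eq_zero _).mp (hvan e heD)
    · rw [Polynomial.coeff_eq_zero_of_natDegree_lt (lt_of_lt_of_le hdegNN (not_lt.mp heD))]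
      exact zero_mem _
  -- conclusion
  rw [hsPow (K + 1) (by omega), Phi_def]
  refine Finset.sum_eq_zero fun e he => ?_
  rcases Nat.eq_zero_or_pos e with rfl | hepos
  · rw [hlow (K + 1) 0 (by omega)]
    exact psi_zero F φ 0
  · obtain ⟨m, rfl⟩ := Nat.exists_eq_succ_of_ne_zero (by omega : e ≠ 0)
    by_cases hem : m + 1 < K + 1
    · rw [hlow (K + 1) (m + 1) hem]
      exact psi_zero F φ _
    · have hmem : (p ^ (K + 1)).coeff (m + 1) ∈ F m :=
        hmono (by omega : K ≤ m) (hcoK (m + 1))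
      rw [psi_apply F φ (hmono (Nat.le_succ m) hmem)]
      exact (hker m _).mpr hmem
end

section
/- Let k be an infinite field and let A be an associative k-algebra with filtration {F_n}_{n≥0}. Fix r ≥ 1 and suppose every element of F_r is algebraic of degree at most d_r. Then every element of the subspace F_1/F_0 ⊕ ⋯ ⊕ F_r/F_{r−1} of gr(A) satisfies b^N = 0, where N = (d_r − 1)·r + 1; in particular this subspace is nil of bounded index at most r·d_r. -/
open Polynomial Finset

namespace GrNilAux

variable {k : Type*} [Field k] {A : Type*} [Ring A] [Algebra k A]
variable {C : Type*} [Ring C] [Algebra k C]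

theorem sum_chi_congr (F : ℕ → Submodule k A) (χ : ∀ n : ℕ, F n →ₗ[k] C)
    {p q : A[X]} {D E : ℕ}
    (hp : ∀ i, p.coeff i ∈ F i) (hq : ∀ i, q.coeff i ∈ F i)
    (hpq : p = q) (hDE : D = E) :
    (∑ m ∈ range D, χ m ⟨p.coeff m, hp m⟩) = ∑ m ∈ range E, χ m ⟨q.coeff m, hq m⟩ := by
  subst hpq; subst hDE; rfl

theorem coeff_mul_mem (F : ℕ → Submodule k A)
    (hmulF : ∀ i j : ℕ, ∀ x ∈ F i, ∀ y ∈ F j, x * y ∈ F (i + j))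
    {p q : A[X]} (hp : ∀ i, p.coeff i ∈ F i) (hq : ∀ i, q.coeff i ∈ F i)
    (i : ℕ) : (p * q).coeff i ∈ F i := by
  rw [coeff_mul]
  refine Submodule.sum_mem _ fun ij hij => ?_
  have h := Finset.HasAntidiagonal.mem_antidiagonal.mp hij
  exact h ▸ hmulF _ _ _ (hp _) _ (hq _)

theorem aux_mul (F : ℕ → Submodule k A)
    (hmulF : ∀ i j : ℕ, ∀ x ∈ F i, ∀ y ∈ F j, x * y ∈ F (i + j))
    (χ : ∀ n : ℕ, F n →ₗ[k] C)
    (hmulχ : ∀ p q : ℕ, ∀ x : F p, ∀ y : F q,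
      χ p x * χ q y = χ (p + q) ⟨(x : A) * (y : A), hmulF p q _ x.2 _ y.2⟩)
    (p q : A[X]) (hp : ∀ i, p.coeff i ∈ F i) (hq : ∀ i, q.coeff i ∈ F i)
    (Dp Dq : ℕ) (hdp : p.natDegree < Dp) (hdq : q.natDegree < Dq) :
    (∑ i ∈ range Dp, χ i ⟨p.coeff i, hp i⟩) * (∑ j ∈ range Dq, χ j ⟨q.coeff j, hq j⟩)
      = ∑ m ∈ range (Dp + Dq), χ m ⟨(p * q).coeff m, coeff_mul_mem F hmulF hp hq m⟩ := by
  classical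
  set g : ℕ × ℕ → C := fun ij => χ (ij.1 + ij.2)
      ⟨p.coeff ij.1 * q.coeff ij.2, hmulF _ _ _ (hp _) _ (hq _)⟩ with hg
  have hgzero : ∀ ij : ℕ × ℕ, (p.natDegree < ij.1 ∨ q.natDegree < ij.2) → g ij = 0 := by
    intro ij h
    have hz : p.coeff ij.1 * q.coeff ij.2 = 0 := by
      rcases h with h | h
      · rw [coeff_eq_zero_of_natDegree_lt h, zero_mul]
      · rw [coeff_eq_zero_of_natDegree_lt h, mul_zero]
    have h0 : (⟨p.coeff ij.1 * q.coeff ij.2, hmulF _ _ _ (hp _) _ (hq _)⟩ :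
        F (ij.1 + ij.2)) = 0 := Subtype.ext hz
    rw [hg]
    simp only [h0, map_zero]
  have hrhs : ∀ m, χ m ⟨(p * q).coeff m, coeff_mul_mem F hmulF hp hq m⟩
      = ∑ ij ∈ (antidiagonal m).attach, g ij.1 := by
    intro m
    have hv : (⟨(p * q).coeff m, coeff_mul_mem F hmulF hp hq m⟩ : F m)
        = ∑ ij ∈ (antidiagonal m).attach,
            (⟨p.coeff ij.1.1 * q.coeff ij.1.2, by
              simpa only [Finset.HasAntidiagonal.mem_antidiagonal.mp ij.2]
                using hmulF ij.1.1 ij.1.2 _ (hp ij.1.1) _ (hq ij.1.2)⟩ : F m) := by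
      apply Subtype.ext
      rw [AddSubmonoidClass.coe_finset_sum]
      show (p * q).coeff m = ∑ ij ∈ (antidiagonal m).attach, p.coeff ij.1.1 * q.coeff ij.1.2
      rw [coeff_mul]
      exact (Finset.sum_attach _ _).symm
    rw [hv, map_sum]
    refine Finset.sum_congr rfl ?_
    rintro ⟨⟨i, j⟩, hij⟩ -
    have h := Finset.HasAntidiagonal.mem_antidiagonal.mp hij
    subst h
    rfl
  calc (∑ i ∈ range Dp, χ i ⟨p.coeff i, hp i⟩) * (∑ j ∈ range Dq, χ j ⟨q.coeff j, hq j⟩)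
      = ∑ ij ∈ range Dp ×ˢ range Dq, g ij := by
        rw [Finset.sum_mul_sum]
        rw [← Finset.sum_product']
        refine Finset.sum_congr rfl ?_
        rintro ⟨i, j⟩ -
        exact hmulχ i j _ _
    _ = ∑ ij ∈ (range (Dp + Dq)).biUnion antidiagonal, g ij := by
        refine Finset.sum_subset ?_ ?_
        · rintro ⟨i, j⟩ hij
          rw [Finset.mem_product, Finset.mem_range, Finset.mem_range] at hij
          refine Finset.mem_biUnion.mpr ⟨i + j, Finset.mem_range.mpr (by omega), ?_⟩
          exact Finset.HasAntidiagonal.mem_antidiagonal.mpr rfl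
        · rintro ⟨i, j⟩ - hij
          rw [Finset.mem_product, Finset.mem_range, Finset.mem_range] at hij
          refine hgzero (i, j) ?_
          by_cases h1 : i < Dp
          · exact Or.inr (by omega)
          · exact Or.inl (by omega)
    _ = ∑ m ∈ range (Dp + Dq), ∑ ij ∈ antidiagonal m, g ij := by
        refine Finset.sum_biUnion ?_
        intro m hm m' hm' hne
        refine Finset.disjoint_left.mpr ?_
        intro ij h1 h2
        exact hne ((Finset.HasAntidiagonal.mem_antidiagonal.mp h1) ▸ (Finset.HasAntidiagonal.mem_antidiagonal.mp h2))
    _ = ∑ m ∈ range (Dp + Dq), χ m ⟨(p * q).coeff m, coeff_mul_mem F hmulF hp hq m⟩ := by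
        refine Finset.sum_congr rfl fun m _ => ?_
        rw [hrhs m, Finset.sum_attach]

theorem coeff_pow_mem (F : ℕ → Submodule k A)
    (hmulF : ∀ i j : ℕ, ∀ x ∈ F i, ∀ y ∈ F j, x * y ∈ F (i + j))
    (S : A[X]) (hS : ∀ i, S.coeff i ∈ F i) :
    ∀ (e i : ℕ), (S ^ (e + 1)).coeff i ∈ F i := by
  intro e
  induction e with
  | zero => intro i; rw [pow_one]; exact hS i
  | succ e ih => intro i; rw [pow_succ]; exact coeff_mul_mem F hmulF ih hS i

theorem aux_pow (F : ℕ → Submodule k A)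
    (hmulF : ∀ i j : ℕ, ∀ x ∈ F i, ∀ y ∈ F j, x * y ∈ F (i + j))
    (χ : ∀ n : ℕ, F n →ₗ[k] C)
    (hmulχ : ∀ p q : ℕ, ∀ x : F p, ∀ y : F q,
      χ p x * χ q y = χ (p + q) ⟨(x : A) * (y : A), hmulF p q _ x.2 _ y.2⟩)
    (S : A[X]) (hS : ∀ i, S.coeff i ∈ F i)
    (D : ℕ) (hD : S.natDegree < D) (e : ℕ) :
    (∑ m ∈ range D, χ m ⟨S.coeff m, hS m⟩) ^ (e + 1)
      = ∑ m ∈ range ((e + 1) * D),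
          χ m ⟨(S ^ (e + 1)).coeff m, coeff_pow_mem F hmulF S hS e m⟩ := by
  induction e with
  | zero =>
    rw [pow_one]
    exact sum_chi_congr F χ _ _ (pow_one S).symm (one_mul D).symm
  | succ e ih =>
    have hdeg : (S ^ (e + 1)).natDegree < (e + 1) * D := by
      refine lt_of_le_of_lt natDegree_pow_le ?_
      have h1 : S.natDegree + 1 ≤ D := hD
      nlinarith [Nat.succ_pos e]
    rw [pow_succ, ih, aux_mul F hmulF χ hmulχ _ _ _ hS _ _ hdeg hD]
    exact sum_chi_congr F χ _ _ (pow_succ S (e + 1)).symm (by ring)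

theorem vandermonde [Infinite k] (F : ℕ → Submodule k A) (M D : ℕ) (v : ℕ → A)
    (h : ∀ t : k, (∑ m ∈ range D, t ^ m • v m) ∈ F M) :
    ∀ m ∈ range D, v m ∈ F M := by
  intro m hm
  set π := (F M).mkQ with hπdef
  rw [← Submodule.Quotient.mk_eq_zero]
  rw [← Module.forall_dual_apply_eq_zero_iff k]
  intro f
  set qq : Polynomial k := ∑ i ∈ range D, Polynomial.C (f (π (v i))) * Polynomial.X ^ i with hqq
  have heval : ∀ t : k, qq.eval t = 0 := by
    intro t
    have h1 : qq.eval t = ∑ i ∈ range D, f (π (v i)) * t ^ i := by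
      rw [hqq, eval_finset_sum]
      simp
    have h2 : ∑ i ∈ range D, f (π (v i)) * t ^ i = f (π (∑ i ∈ range D, t ^ i • v i)) := by
      rw [map_sum, map_sum]
      refine Finset.sum_congr rfl fun i _ => ?_
      rw [map_smul, map_smul, smul_eq_mul, mul_comm]
    have h3 : π (∑ i ∈ range D, t ^ i • v i) = 0 := by
      rw [hπdef, Submodule.mkQ_apply, Submodule.Quotient.mk_eq_zero]
      exact h t
    rw [h1, h2, h3, map_zero]
  have hq0 : qq = 0 := Polynomial.funext fun t => by rw [heval t, eval_zero]
  have := congrArg (fun p => Polynomial.coeff p m) hq0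
  simpa [hqq, hπdef, finset_sum_coeff, coeff_C_mul, coeff_X_pow, Submodule.mkQ_apply,
    Finset.mem_range.mp hm] using this

theorem pow_in (F : ℕ → Submodule k A) (hmono : Monotone F)
    (hmulF : ∀ i j : ℕ, ∀ x ∈ F i, ∀ y ∈ F j, x * y ∈ F (i + j))
    (r d : ℕ) (hd : 1 ≤ d)
    (halg : ∀ s ∈ F r, s ^ d ∈ Submodule.span k ((fun i : ℕ => s ^ i) '' Set.Icc 1 (d - 1)))
    (s : A) (hs : s ∈ F r) : ∀ e, d ≤ e → s ^ e ∈ F ((d - 1) * r) := by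
  set W := Submodule.span k ((fun i : ℕ => s ^ i) '' Set.Icc 1 (d - 1)) with hW
  have hpows : ∀ j : ℕ, s ^ (j + 1) ∈ F ((j + 1) * r) := by
    intro j
    induction j with
    | zero => simpa using hs
    | succ j ih =>
      have h := hmulF _ _ _ ih _ hs
      rw [pow_succ]
      have : (j + 1) * r + r = (j + 1 + 1) * r := by ring
      exact this ▸ h
  have hWF : W ≤ F ((d - 1) * r) := by
    rw [hW, Submodule.span_le]
    rintro _ ⟨i, hi, rfl⟩
    obtain ⟨h1, h2⟩ := hi
    obtain ⟨i', rfl⟩ := Nat.exists_eq_add_of_le h1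
    have := hpows i'
    have hle : (i' + 1) * r ≤ (d - 1) * r := Nat.mul_le_mul_right r (by omega)
    have heq : 1 + i' = i' + 1 := by omega
    rw [heq]
    exact hmono hle this
  have hstep : ∀ w ∈ W, w * s ∈ W := by
    intro w hw
    induction hw using Submodule.span_induction with
    | mem x hx =>
      obtain ⟨i, hi, rfl⟩ := hx
      obtain ⟨h1, h2⟩ := hi
      rcases Nat.lt_or_ge (i + 1) d with hlt | hge
      · exact Submodule.subset_span ⟨i + 1, ⟨by omega, by omega⟩, pow_succ s i⟩
      · have hid : i + 1 = d := by omega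
        show s ^ i * s ∈ W
        rw [← pow_succ, hid, hW]
        exact halg s hs
    | zero => rw [zero_mul]; exact zero_mem _
    | add x y hx hy ihx ihy => rw [add_mul]; exact add_mem ihx ihy
    | smul c x hx ihx => rw [smul_mul_assoc]; exact Submodule.smul_mem _ _ ihx
  have hpow : ∀ e, d ≤ e → s ^ e ∈ W := by
    intro e he
    induction e, he using Nat.le_induction with
    | base => exact halg s hs
    | succ e he ih => rw [pow_succ]; exact hstep _ ih
  exact fun e he => hWF (hpow e he)

end GrNilAux

/-- Let `k` be an infinite field, `A` an associative `k`-algebra with filtration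
`F_0 ⊆ F_1 ⊆ ⋯`, and fix `r ≥ 1`.  Suppose every element of `F_r` is algebraic of
degree at most `d_r` (with `d_r ≥ 1`).  Then every element `b` of the subspace
`F_1/F_0 ⊕ ⋯ ⊕ F_r/F_{r−1}` of `gr(A)` satisfies `b^N = 0` for `N = (d_r − 1)·r + 1`;
in particular this subspace is nil of bounded index at most `r·d_r`.

The associated graded algebra `gr(A) = ⊕_{n≥0} F_n/F_{n−1}` (with `F_{−1} = 0`) is
presented by an algebra `B` together with `k`-linear maps `φ n : F n → B` realizing the
quotient maps `F_n → F_n/F_{n−1} ⊆ gr(A)`: the kernel of `φ n` is exactly `F_{n-1}`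
(with `φ 0` injective), and `φ p x * φ q y = φ (p+q) (x*y)`, which encodes the
multiplication of `gr(A)`.  The subspace `F_1/F_0 ⊕ ⋯ ⊕ F_r/F_{r−1}` is then
`⨆ n ∈ [1, r], range (φ n)`. -/
theorem gr_nilpotency_index_bound
    (k : Type*) [Field k] [Infinite k]
    (A : Type*) [Ring A] [Algebra k A]
    (F : ℕ → Submodule k A)
    (hmono : Monotone F)
    (hexh : ∀ a : A, ∃ n : ℕ, a ∈ F n)
    (hmulF : ∀ i j : ℕ, ∀ x ∈ F i, ∀ y ∈ F j, x * y ∈ F (i + j))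
    (B : Type*) [Ring B] [Algebra k B]
    (φ : ∀ n : ℕ, F n →ₗ[k] B)
    (hker0 : ∀ x : F 0, φ 0 x = 0 ↔ (x : A) = 0)
    (hker : ∀ n : ℕ, ∀ x : F (n + 1), φ (n + 1) x = 0 ↔ (x : A) ∈ F n)
    (hmulφ : ∀ p q : ℕ, ∀ x : F p, ∀ y : F q,
      φ p x * φ q y = φ (p + q) ⟨(x : A) * (y : A), hmulF p q _ x.2 _ y.2⟩)
    (r d : ℕ) (hr : 1 ≤ r) (hd : 1 ≤ d)
    (halg : ∀ s ∈ F r, s ^ d ∈ Submodule.span k ((fun i : ℕ => s ^ i) '' Set.Icc 1 (d - 1))) :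
    ∀ b ∈ ⨆ n ∈ Finset.Icc 1 r, LinearMap.range (φ n),
      b ^ ((d - 1) * r + 1) = 0 ∧ b ^ (r * d) = 0 := by
  classical
  intro b hb
  suffices h1 : b ^ ((d - 1) * r + 1) = 0 by
    refine ⟨h1, ?_⟩
    have hrd : r * d = ((d - 1) * r + 1) + (r - 1) := by
      obtain ⟨d', rfl⟩ := Nat.exists_eq_add_of_le hd
      obtain ⟨r', rfl⟩ := Nat.exists_eq_add_of_le hr
      have e1 : 1 + d' - 1 = d' := by omega
      have e2 : 1 + r' - 1 = r' := by omega
      rw [e1, e2]; ring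
    rw [hrd, pow_add, h1, zero_mul]
  -- decompose b
  rw [Submodule.mem_iSup_iff_exists_finsupp] at hb
  obtain ⟨c, hc, hsum⟩ := hb
  have hczero : ∀ n, n ∉ Finset.Icc 1 r → c n = 0 := by
    intro n hn
    have := hc n
    rwa [iSup_neg hn, Submodule.mem_bot] at this
  have hcmem : ∀ n ∈ Finset.Icc 1 r, c n ∈ LinearMap.range (φ n) := by
    intro n hn
    have := hc n
    rwa [iSup_pos hn] at this
  have hsupp : c.support ⊆ Finset.Icc 1 r := by
    intro n hn
    by_contra hcon
    exact Finsupp.mem_support_iff.mp hn (hczero n hcon)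
  have hb' : b = ∑ n ∈ Finset.Icc 1 r, c n := by
    rw [← hsum, Finsupp.sum]
    exact Finset.sum_subset hsupp (fun n _ hns => Finsupp.notMem_support_iff.mp hns)
  have hch : ∀ n : ℕ, ∃ y : F n,
      (n ∈ Finset.Icc 1 r → φ n y = c n) ∧ (n ∉ Finset.Icc 1 r → y = 0) := by
    intro n
    by_cases hn : n ∈ Finset.Icc 1 r
    · obtain ⟨y, hy⟩ := hcmem n hn
      exact ⟨y, fun _ => hy, fun h => absurd hn h⟩
    · exact ⟨0, fun h => absurd h hn, fun _ => rfl⟩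
  choose ξ hξ1 hξ2 using hch
  set S : Polynomial A := ∑ n ∈ Finset.Icc 1 r, Polynomial.C ((ξ n : A)) * Polynomial.X ^ n
    with hSdef
  have hScoeff : ∀ m, S.coeff m = if m ∈ Finset.Icc 1 r then (ξ m : A) else 0 := by
    intro m
    rw [hSdef, finset_sum_coeff]
    simp only [coeff_C_mul, coeff_X_pow, mul_ite, mul_one, mul_zero]
    rw [Finset.sum_ite_eq (Finset.Icc 1 r) m (fun n => (ξ n : A))]
  have hS : ∀ i, S.coeff i ∈ F i := by
    intro i
    rw [hScoeff]
    split
    · exact (ξ i).2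
    · exact (F i).zero_mem
  have hSdeg : S.natDegree < r + 1 := by
    refine Nat.lt_succ_of_le (natDegree_le_iff_coeff_eq_zero.mpr ?_)
    intro m hm
    rw [hScoeff, if_neg (by simp [Finset.mem_Icc]; omega)]
  have hrange : Finset.range (r + 1) = insert 0 (Finset.Icc 1 r) := by
    ext x; simp [Finset.mem_Icc, Finset.mem_range]; omega
  have hbS : b = ∑ m ∈ Finset.range (r + 1), φ m ⟨S.coeff m, hS m⟩ := by
    rw [hrange, Finset.sum_insert (by simp)]
    have h00 : (⟨S.coeff 0, hS 0⟩ : F 0) = 0 := Subtype.ext (by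
      show S.coeff 0 = 0
      rw [hScoeff]; simp)
    rw [h00, map_zero, zero_add, hb']
    refine Finset.sum_congr rfl fun n hn => ?_
    rw [← hξ1 n hn]
    congr 1
    exact Subtype.ext (by
      show (ξ n : A) = S.coeff n
      rw [hScoeff, if_pos hn])
  -- generic substitution: coefficients of S^N lie in F M
  have hdM : d ≤ (d - 1) * r + 1 := by
    have : (d - 1) * 1 ≤ (d - 1) * r := Nat.mul_le_mul_left _ hr
    omega
  have hcoeffM : ∀ m ∈ Finset.range (((d - 1) * r + 1) * (r + 1)),
      (S ^ ((d - 1) * r + 1)).coeff m ∈ F ((d - 1) * r) := by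
    apply GrNilAux.vandermonde F ((d - 1) * r)
    intro t
    set ψ : ∀ n : ℕ, F n →ₗ[k] A := fun n => t ^ n • (F n).subtype with hψ
    have hmulψ : ∀ p q : ℕ, ∀ x : F p, ∀ y : F q,
        ψ p x * ψ q y = ψ (p + q) ⟨(x : A) * (y : A), hmulF p q _ x.2 _ y.2⟩ := by
      intro p q x y
      simp only [hψ, LinearMap.smul_apply, Submodule.subtype_apply]
      rw [smul_mul_assoc, mul_smul_comm, smul_smul, ← pow_add]
    have hst := GrNilAux.aux_pow F hmulF ψ hmulψ S hS (r + 1) hSdeg ((d - 1) * r)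
    have hstval : (∑ m ∈ Finset.range (r + 1), ψ m ⟨S.coeff m, hS m⟩) ∈ F r := by
      refine Submodule.sum_mem _ fun m hm => ?_
      have hmr : m ≤ r := by have := Finset.mem_range.mp hm; omega
      have : ψ m ⟨S.coeff m, hS m⟩ = t ^ m • S.coeff m := rfl
      rw [this]
      exact Submodule.smul_mem _ _ (hmono hmr (hS m))
    have hpow := GrNilAux.pow_in F hmono hmulF r d hd halg _ hstval ((d - 1) * r + 1) hdM
    rw [hst] at hpow
    exact hpow
  rw [hbS, GrNilAux.aux_pow F hmulF φ hmulφ S hS (r + 1) hSdeg ((d - 1) * r)]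
  apply Finset.sum_eq_zero
  intro m hm
  rcases Nat.lt_or_ge m ((d - 1) * r + 1) with hlt | hge
  · have hc0 : (S ^ ((d - 1) * r + 1)).coeff m = 0 := by
      obtain ⟨g, hg⟩ := X_dvd_iff.mpr (show S.coeff 0 = 0 by rw [hScoeff]; simp)
      have hdvd : (Polynomial.X : A[X]) ^ ((d - 1) * r + 1) ∣ S ^ ((d - 1) * r + 1) :=
        ⟨g ^ ((d - 1) * r + 1), by rw [hg, Commute.mul_pow (commute_X g)]⟩
      exact X_pow_dvd_iff.mp hdvd m hlt
    have h0 : (⟨(S ^ ((d - 1) * r + 1)).coeff m,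
        GrNilAux.coeff_pow_mem F hmulF S hS ((d - 1) * r) m⟩ : F m) = 0 := Subtype.ext hc0
    rw [h0, map_zero]
  · obtain ⟨m', rfl⟩ : ∃ m', m = m' + 1 := ⟨m - 1, by omega⟩
    refine (hker m' _).mpr ?_
    exact hmono (by omega : (d - 1) * r ≤ m') (hcoeffM _ hm)
end

section
/- Let A be a unital associative k-algebra with filtration {A_n}_{n≥0}, and let R = ⊕_{n≥0} x^n A_n ⊆ A[x] be the Rees algebra of the filtration. Let a(x) = a_1 x + a_2 x^2 + … + a_m x^m ∈ R with a_i ∈ A_i for each i, and suppose a(x) is integral over k[x]. Then a(x)^N ∈ xR for some N ≥ 0. -/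
open Polynomial

namespace ReesAux

variable {k : Type*} [Field k] {A : Type*} [Ring A] [Algebra k A]

/-- The submodule `xR` of `A[x]`: polynomials `f` with `f.coeff 0 = 0` and
`f.coeff (j+1) ∈ F j` for all `j`. -/
def xR (k : Type*) [Field k] {A : Type*} [Ring A] [Algebra k A] (F : ℕ → Submodule k A) :
    Submodule k (Polynomial A) where
  carrier := {f | f.coeff 0 = 0 ∧ ∀ j : ℕ, f.coeff (j + 1) ∈ F j}
  add_mem' := by
    rintro a b ⟨ha0, ha⟩ ⟨hb0, hb⟩
    exact ⟨by simp [ha0, hb0], fun j => by simpa using add_mem (ha j) (hb j)⟩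
  zero_mem' := ⟨by simp, fun j => by simp⟩
  smul_mem' := by
    rintro c f ⟨h0, h⟩
    exact ⟨by simp [h0], fun j => by
      simpa [Polynomial.coeff_smul] using (F j).smul_mem c (h j)⟩

theorem mem_xR_iff {F : ℕ → Submodule k A} {f : Polynomial A} :
    f ∈ xR k F ↔ f.coeff 0 = 0 ∧ ∀ j : ℕ, f.coeff (j + 1) ∈ F j := Iff.rfl

/-- Product of two elements of `R` is in `R`. -/
theorem coeff_mul_mem {F : ℕ → Submodule k A}
    (hmulF : ∀ i j : ℕ, ∀ x ∈ F i, ∀ y ∈ F j, x * y ∈ F (i + j))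
    {f g : Polynomial A} (hf : ∀ n, f.coeff n ∈ F n) (hg : ∀ n, g.coeff n ∈ F n) :
    ∀ n, (f * g).coeff n ∈ F n := by
  intro n
  rw [Polynomial.coeff_mul]
  refine Submodule.sum_mem _ ?_
  rintro ⟨a, b⟩ hab
  rw [Finset.HasAntidiagonal.mem_antidiagonal] at hab
  exact hab ▸ hmulF a b _ (hf a) _ (hg b)

theorem pow_coeff_mem {F : ℕ → Submodule k A}
    (hmulF : ∀ i j : ℕ, ∀ x ∈ F i, ∀ y ∈ F j, x * y ∈ F (i + j))
    {p : Polynomial A} (hp : ∀ n, p.coeff n ∈ F n) :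
    ∀ i, 1 ≤ i → ∀ n, (p ^ i).coeff n ∈ F n := by
  intro i hi
  induction i with
  | zero => omega
  | succ i ih =>
    rcases Nat.eq_or_lt_of_le hi with h | h
    · simpa [← h] using hp
    · rw [pow_succ]
      exact coeff_mul_mem hmulF (ih (by omega)) hp

/-- `xR` is a right ideal for multiplication by elements of `R`. -/
theorem xR_mul_mem {F : ℕ → Submodule k A}
    (hmulF : ∀ i j : ℕ, ∀ x ∈ F i, ∀ y ∈ F j, x * y ∈ F (i + j))
    {f g : Polynomial A} (hf : f ∈ xR k F) (hg : ∀ n, g.coeff n ∈ F n) :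
    f * g ∈ xR k F := by
  obtain ⟨hf0, hf1⟩ := hf
  refine ⟨by rw [Polynomial.mul_coeff_zero, hf0, zero_mul], fun j => ?_⟩
  rw [Polynomial.coeff_mul]
  refine Submodule.sum_mem _ ?_
  rintro ⟨a, b⟩ hab
  rw [Finset.HasAntidiagonal.mem_antidiagonal] at hab
  match a, hab with
  | 0, hab => simp [hf0]
  | (a + 1), hab =>
    have hj : a + 1 + b = j + 1 := hab
    have : a + b = j := by omega
    exact this ▸ hmulF a b _ (hf1 a) _ (hg b)

theorem X_pow_mul_mem_xR {F : ℕ → Submodule k A} (hmono : Monotone F)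
    {f : Polynomial A} (hf : ∀ n, f.coeff n ∈ F n) {t : ℕ} (ht : 1 ≤ t) :
    (X : Polynomial A) ^ t * f ∈ xR k F := by
  constructor
  · rw [Polynomial.X_pow_mul, Polynomial.coeff_mul_X_pow']
    simp [Nat.not_le.mpr (by omega : (0 : ℕ) < t)]
  · intro j
    rw [Polynomial.X_pow_mul, Polynomial.coeff_mul_X_pow']
    split
    · exact hmono (by omega : j + 1 - t ≤ j) (hf _)
    · exact (F j).zero_mem

/-- Decompose `q.map (algebraMap k A) * f` into the constant-coefficient part and
`X`-multiples. -/
theorem map_mul_decomp (q : Polynomial k) (f : Polynomial A) :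
    q.map (algebraMap k A) * f
      = q.coeff 0 • f + ∑ i ∈ Finset.range q.natDegree,
          q.coeff (i + 1) • ((X : Polynomial A) ^ (i + 1) * f) := by
  conv_lhs => rw [q.as_sum_range' (q.natDegree + 1) (Nat.lt_succ_self _)]
  rw [Polynomial.map_sum, Finset.sum_mul, Finset.sum_range_succ']
  have key : ∀ (i : ℕ) (c : k),
      ((Polynomial.monomial i c).map (algebraMap k A)) * f = c • ((X : Polynomial A) ^ i * f) := by
    intro i c
    rw [Polynomial.map_monomial, ← Polynomial.C_mul_X_pow_eq_monomial,
      ← Polynomial.algebraMap_apply, mul_assoc, ← Algebra.smul_def]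
  simp only [key]
  rw [add_comm]
  congr 1
  rw [pow_zero, one_mul]

theorem pow_coeff_eq_zero {p : Polynomial A} (hp0 : p.coeff 0 = 0)
    {N j : ℕ} (hj : j < N) : (p ^ N).coeff j = 0 := by
  have hp : p = X * p.divX := by
    conv_lhs => rw [← Polynomial.X_mul_divX_add p]
    rw [hp0, Polynomial.C_0, add_zero]
  rw [hp, (Polynomial.commute_X p.divX).mul_pow, Polynomial.X_pow_mul,
    Polynomial.coeff_mul_X_pow']
  exact if_neg (by omega)

theorem natDegree_le_of_mem_span {G : Set (Polynomial A)} {B : ℕ}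
    (h : ∀ x ∈ G, x.natDegree ≤ B) {g : Polynomial A}
    (hg : g ∈ Submodule.span k G) : g.natDegree ≤ B := by
  induction hg using Submodule.span_induction with
  | mem x hx => exact h x hx
  | zero => simp
  | add x y hx hy ihx ihy => exact (Polynomial.natDegree_add_le x y).trans (max_le ihx ihy)
  | smul a x hx ihx =>
    refine Polynomial.natDegree_le_iff_coeff_eq_zero.mpr fun m hm => ?_
    rw [Polynomial.coeff_smul, Polynomial.coeff_eq_zero_of_natDegree_lt (lt_of_le_of_lt ihx hm),
      smul_zero]

end ReesAux

open Polynomial ReesAux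

/-- Let `A` be a unital associative `k`-algebra with filtration `{A_n}` and let
`R = ⊕_{n≥0} x^n A_n ⊆ A[x]` be the Rees algebra of the filtration, i.e. the set of
polynomials `p` with `p.coeff n ∈ A_n` for all `n`.  If `a(x) = a_1 x + ⋯ + a_m x^m ∈ R`
(a polynomial with zero constant term and `i`-th coefficient in `A_i`) is integral over
`k[x]` — i.e. `a(x)^n + p_{n−1}(x) a(x)^{n−1} + ⋯ + p_0(x) = 0` for some `n ≥ 1` and
`p_i(x) ∈ k[x]` — then `a(x)^N ∈ xR` for some `N ≥ 0`. -/
theorem rees_pow_mem_xR_of_integral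
    (k : Type*) [Field k] (A : Type*) [Ring A] [Algebra k A]
    (F : ℕ → Submodule k A)
    (hmono : Monotone F)
    (hexh : ∀ a : A, ∃ n : ℕ, a ∈ F n)
    (hmulF : ∀ i j : ℕ, ∀ x ∈ F i, ∀ y ∈ F j, x * y ∈ F (i + j))
    (p : Polynomial A)
    (hp0 : p.coeff 0 = 0)
    (hpR : ∀ n : ℕ, p.coeff n ∈ F n)
    (hint : ∃ n : ℕ, 1 ≤ n ∧ ∃ q : ℕ → Polynomial k,
      p ^ n + ∑ i ∈ Finset.range n, (q i).map (algebraMap k A) * p ^ i = 0) :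
    ∃ N : ℕ, ∃ r : Polynomial A, (∀ n : ℕ, r.coeff n ∈ F n) ∧ p ^ N = Polynomial.X * r := by
  classical
  obtain ⟨n, hn1, q, heq⟩ := hint
  set T : ℕ := (q 0).natDegree with hT
  -- the constant coefficient of `q 0` maps to zero
  have hq00 : algebraMap k A ((q 0).coeff 0) = 0 := by
    have h0 := congrArg Polynomial.constantCoeff heq
    simp only [map_add, map_sum, map_mul, map_pow, map_zero] at h0
    have hc : Polynomial.constantCoeff p = 0 := hp0
    rw [hc, zero_pow (by omega : n ≠ 0)] at h0
    rw [Finset.sum_eq_single_of_mem 0 (Finset.mem_range.mpr (by omega))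
      (fun i _ hi => by rw [zero_pow hi, mul_zero])] at h0
    simpa using h0
  -- generating set
  set G : Set (Polynomial A) :=
    ((fun i => p ^ i) '' Set.Icc 1 (n - 1)) ∪
    ((fun t => (X : Polynomial A) ^ t) '' Set.Icc 1 T) with hG
  set W : Submodule k (Polynomial A) := Submodule.span k G with hW
  set V : Submodule k (Polynomial A) := xR k F ⊔ W with hV
  -- each `q i .map * p^i` term with `1 ≤ i ≤ n-1` lies in `V`
  have hterm : ∀ i, 1 ≤ i → i ≤ n - 1 → (q i).map (algebraMap k A) * p ^ i ∈ V := by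
    intro i hi1 hi2
    rw [map_mul_decomp]
    refine Submodule.add_mem _ ?_ (Submodule.sum_mem _ fun t _ => ?_)
    · refine Submodule.smul_mem _ _ (Submodule.mem_sup_right ?_)
      exact Submodule.subset_span (Or.inl ⟨i, ⟨hi1, hi2⟩, rfl⟩)
    · refine Submodule.smul_mem _ _ (Submodule.mem_sup_left ?_)
      exact X_pow_mul_mem_xR hmono (pow_coeff_mem hmulF hpR i hi1) (by omega)
  -- the `i = 0` term lies in `V`
  have hterm0 : (q 0).map (algebraMap k A) * p ^ 0 ∈ V := by
    rw [pow_zero, mul_one, ← mul_one ((q 0).map (algebraMap k A)), map_mul_decomp]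
    refine Submodule.add_mem _ ?_ (Submodule.sum_mem _ fun t ht => ?_)
    · have : (q 0).coeff 0 • (1 : Polynomial A) = 0 := by
        rw [Algebra.smul_def, mul_one, Polynomial.algebraMap_apply, hq00, Polynomial.C_0]
      rw [this]; exact Submodule.zero_mem _
    · rw [mul_one]
      refine Submodule.smul_mem _ _ (Submodule.mem_sup_right ?_)
      refine Submodule.subset_span (Or.inr ⟨t + 1, ⟨by omega, ?_⟩, rfl⟩)
      have := Finset.mem_range.mp ht
      omega
  -- `p ^ n ∈ V`
  have hpn : p ^ n ∈ V := by
    have : p ^ n = -∑ i ∈ Finset.range n, (q i).map (algebraMap k A) * p ^ i :=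
      eq_neg_of_add_eq_zero_left heq
    rw [this]
    refine Submodule.neg_mem _ (Submodule.sum_mem _ fun i hi => ?_)
    rcases Nat.eq_zero_or_pos i with h0 | h1
    · exact h0 ▸ hterm0
    · exact hterm i h1 (by have := Finset.mem_range.mp hi; omega)
  -- `V` is stable under right multiplication by `p`
  have hmulV : ∀ f ∈ V, f * p ∈ V := by
    intro f hf
    rw [hV, Submodule.mem_sup] at hf
    obtain ⟨s, hs, g, hg, rfl⟩ := hf
    rw [add_mul]
    refine Submodule.add_mem _ (Submodule.mem_sup_left (xR_mul_mem hmulF hs hpR)) ?_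
    -- span part
    have : ∀ x ∈ G, x * p ∈ V := by
      rintro x (⟨i, ⟨hi1, hi2⟩, rfl⟩ | ⟨t, ⟨ht1, _⟩, rfl⟩)
      · rw [← pow_succ]
        rcases Nat.lt_or_ge (i + 1) n with h | h
        · exact Submodule.mem_sup_right
            (Submodule.subset_span (Or.inl ⟨i + 1, ⟨by omega, by omega⟩, rfl⟩))
        · have : i + 1 = n := by omega
          exact this ▸ hpn
      · exact Submodule.mem_sup_left (X_pow_mul_mem_xR hmono hpR ht1)
    rw [hW] at hg
    induction hg using Submodule.span_induction with
    | mem x hx => exact this x hx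
    | zero => rw [zero_mul]; exact Submodule.zero_mem _
    | add x y hx hy ihx ihy => rw [add_mul]; exact Submodule.add_mem _ ihx ihy
    | smul a x hx ihx => rw [smul_mul_assoc]; exact Submodule.smul_mem _ _ ihx
  -- `p ^ (n + m) ∈ V` for all `m`
  have hpow : ∀ m : ℕ, p ^ (n + m) ∈ V := by
    intro m
    induction m with
    | zero => simpa using hpn
    | succ m ih => rw [← add_assoc, pow_succ]; exact hmulV _ ih
  -- degree bound for elements of `W`
  set B : ℕ := max ((n - 1) * p.natDegree) T with hB
  have hGdeg : ∀ x ∈ G, x.natDegree ≤ B := by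
    rintro x (⟨i, ⟨_, hi2⟩, rfl⟩ | ⟨t, ⟨_, ht2⟩, rfl⟩)
    · exact (Polynomial.natDegree_pow_le).trans
        (le_max_of_le_left (Nat.mul_le_mul_right _ hi2))
    · exact (Polynomial.natDegree_X_pow_le t).trans (le_max_of_le_right ht2)
  -- choose N
  set N : ℕ := n + (B + 1) with hN
  have hNB : B < N := by omega
  have hmemN : p ^ N ∈ V := hpow (B + 1)
  rw [hV, Submodule.mem_sup] at hmemN
  obtain ⟨s, hs, g, hg, hsg⟩ := hmemN
  have hgdeg : g.natDegree ≤ B := natDegree_le_of_mem_span hGdeg hg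
  -- conclude
  have hN0 : (p ^ N).coeff 0 = 0 := pow_coeff_eq_zero hp0 (by omega)
  refine ⟨N, (p ^ N).divX, fun j => ?_, ?_⟩
  · rw [Polynomial.coeff_divX]
    rcases Nat.lt_or_ge (j + 1) N with h | h
    · rw [pow_coeff_eq_zero hp0 h]; exact (F j).zero_mem
    · have hgc : g.coeff (j + 1) = 0 :=
        Polynomial.coeff_eq_zero_of_natDegree_lt (by omega)
      have : (p ^ N).coeff (j + 1) = s.coeff (j + 1) := by
        rw [← hsg, Polynomial.coeff_add, hgc, add_zero]
      rw [this]
      exact hs.2 j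
  · conv_lhs => rw [← Polynomial.X_mul_divX_add (p ^ N)]
    rw [hN0, Polynomial.C_0, add_zero]
end
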